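/- arXiv:1105.1048 — 5 statements merged into one kernel-verified Lean document; each statement's English description precedes it below -/
import Mathlib

section
/- Let G = H₁ ∗_K H₂ be a nondegenerate amalgamated free product (H₁ ≠ K and H₂ ≠ K). Every element of G of finite order is conjugate to an element of the image of H₁ or of the image of H₂. Consequently, if H₁ and H₂ are torsion free, then G is torsion free. -/
open Monoid CoprodI PushoutI

/-- The old Mathlib `Monoid.IsTorsionFree` (removed since), restored verbatim. -/
def Monoid.IsTorsionFree (G : Type*) [Monoid G] : Prop :=
  ∀ g : G, g ≠ 1 → ¬IsOfFinOrder g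

namespace TorsionAmalgamHelper

variable {K : Type} [Group K] {H : Bool → Type} [∀ b, Group (H b)]

section

variable (φ : ∀ b, K →* H b)

/-- product of a list of letters in the pushout -/
def lprod (l : List (Σ b, H b)) : PushoutI φ :=
  (l.map fun x => PushoutI.of (φ := φ) x.1 x.2).prod

end

variable {φ : ∀ b, K →* H b}

lemma lprod_nil : lprod φ ([] : List (Σ b, H b)) = 1 := rfl

lemma lprod_cons (x : Σ b, H b) (l : List (Σ b, H b)) :
    lprod φ (x :: l) = PushoutI.of (φ := φ) x.1 x.2 * lprod φ l := by
  simp [lprod]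

lemma lprod_append (l₁ l₂ : List (Σ b, H b)) :
    lprod φ (l₁ ++ l₂) = lprod φ l₁ * lprod φ l₂ := by
  simp [lprod]

lemma ofCoprodI_word_prod (w : Word H) :
    ofCoprodI (w.prod) = lprod (φ := φ) w.toList := by
  simp [Word.prod, lprod, map_list_prod, List.map_map, Function.comp_def, ofCoprodI_of]

lemma base_mul_of (b : Bool) (k : K) (a : H b) :
    base φ k * PushoutI.of (φ := φ) b a = PushoutI.of (φ := φ) b (φ b k * a) := by
  rw [map_mul, of_apply_eq_base]

lemma phi_mul_not_mem {b : Bool} (k : K) {a : H b} (ha : a ∉ (φ b).range) :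
    φ b k * a ∉ (φ b).range := by
  rintro ⟨k', hk'⟩
  exact ha ⟨k⁻¹ * k', by rw [map_mul, map_inv, hk', inv_mul_cancel_left]⟩

lemma ne_one_of_not_mem {b : Bool} {a : H b} (ha : a ∉ (φ b).range) : a ≠ 1 :=
  fun h => ha (h ▸ one_mem _)

lemma pow_eq_one_of_isConj {G : Type*} [Group G] {p q : G} (h : IsConj p q) {m : ℕ}
    (hq : q ^ m = 1) : p ^ m = 1 := by
  obtain ⟨c, hc⟩ := isConj_iff.mp h
  rw [← hc, conj_pow] at hq
  have := congrArg (fun z => c⁻¹ * z * c) hq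
  simpa [mul_assoc] using this

/-- powers of a cyclically reduced word of length ≥ 1 with distinct end indices are nontrivial -/
lemma lprod_pow_ne_one (hinj : ∀ b, Function.Injective (φ b))
    {l : List (Σ b, H b)} (hch : l.Chain' fun x y => x.1 ≠ y.1)
    (hred : ∀ x ∈ l, x.2 ∉ (φ x.1).range) (hne : l ≠ [])
    (hfl : (l.head hne).1 ≠ (l.getLast hne).1) :
    ∀ m : ℕ, 1 ≤ m → lprod φ l ^ m ≠ 1 := by
  have key : ∀ m : ℕ, 1 ≤ m → ∃ big : List (Σ b, H b),
      big.Chain' (fun x y => x.1 ≠ y.1) ∧ (∀ x ∈ big, x.2 ∉ (φ x.1).range) ∧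
      big.head? = l.head? ∧ lprod φ big = lprod φ l ^ m := by
    intro m hm
    induction m with
    | zero => omega
    | succ m ih =>
      rcases Nat.lt_or_ge m 1 with h1 | h1
      · have : m = 0 := by omega
        subst this
        exact ⟨l, hch, hred, rfl, by rw [pow_one]⟩
      · obtain ⟨big, hbch, hbred, hbh, hbprod⟩ := ih h1
        refine ⟨l ++ big, ?_, ?_, ?_, ?_⟩
        · refine List.IsChain.append hch hbch ?_
          intro x hx y hy
          rw [List.getLast?_eq_getLast_of_ne_nil hne, Option.mem_def, Option.some_inj] at hx
          rw [hbh, List.head?_eq_head hne, Option.mem_def, Option.some_inj] at hy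
          rw [← hx, ← hy]
          exact hfl.symm
        · intro x hx
          rcases List.mem_append.mp hx with h | h
          · exact hred x h
          · exact hbred x h
        · cases l with
          | nil => exact absurd rfl hne
          | cons a t => rfl
        · rw [lprod_append, hbprod, ← pow_succ']
  intro m hm hcontra
  obtain ⟨big, hbch, hbred, hbh, hbprod⟩ := key m hm
  have hbigne : big ≠ [] := by
    intro h
    rw [h, List.head?_eq_head hne] at hbh
    simp at hbh
  let w : Word H := ⟨big, fun x hx h1 => (hbred x hx) (h1 ▸ one_mem _), hbch⟩
  have hwred : Reduced φ w := hbred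
  have hmem : ofCoprodI w.prod ∈ (base φ).range := by
    rw [ofCoprodI_word_prod]
    show lprod φ big ∈ _
    rw [hbprod, hcontra]
    exact one_mem _
  have := hwred.eq_empty_of_mem_range hinj hmem
  have : big = [] := congrArg Word.toList this
  exact hbigne this

lemma conj_of_finite_order (hinj : ∀ b, Function.Injective (φ b)) :
    ∀ n : ℕ, ∀ l : List (Σ b, H b), l.length ≤ n →
      l.Chain' (fun x y => x.1 ≠ y.1) → (∀ x ∈ l, x.2 ∉ (φ x.1).range) →
      ∀ k : K, (∃ m : ℕ, 1 ≤ m ∧ (base φ k * lprod φ l) ^ m = 1) →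
      ∃ b h, IsConj (PushoutI.of (φ := φ) b h) (base φ k * lprod φ l) := by
  intro n
  induction n with
  | zero =>
    intro l hlen _ _ k _
    have hl : l = [] := List.length_eq_zero_iff.mp (Nat.le_zero.mp hlen)
    subst hl
    refine ⟨true, φ true k, ?_⟩
    rw [lprod_nil, mul_one, of_apply_eq_base]
  | succ n ih =>
    rintro l hlen hch hred k hord
    rcases l with _ | ⟨⟨i, a⟩, rest⟩
    · refine ⟨true, φ true k, ?_⟩
      rw [lprod_nil, mul_one, of_apply_eq_base]
    rcases eq_or_ne rest [] with rfl | hrne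
    · refine ⟨i, φ i k * a, ?_⟩
      simp only [lprod_cons, lprod_nil, mul_one]
      rw [base_mul_of]
    -- rest ≠ []
    obtain ⟨⟨j, c⟩, hlr⟩ : ∃ p, rest.getLast hrne = p := ⟨_, rfl⟩
    have hdl : rest.dropLast ++ [⟨j, c⟩] = rest := by
      rw [← hlr]; exact List.dropLast_append_getLast hrne
    set mid := rest.dropLast with hmiddef
    have hchrest : rest.Chain' (fun x y => x.1 ≠ y.1) := (List.isChain_cons.mp hch).2
    have hchsplit : (mid ++ [(⟨j, c⟩ : Σ b, H b)]).Chain' (fun x y => x.1 ≠ y.1) := by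
      rw [hdl]; exact hchrest
    obtain ⟨hchmid, -, hjunc⟩ := List.isChain_append.mp hchsplit
    by_cases hij : j = i
    · subst hij
      have hlprodl : base φ k * lprod φ (⟨j, a⟩ :: rest) =
          PushoutI.of (φ := φ) j (φ j k * a) *
            (lprod φ mid * PushoutI.of (φ := φ) j c) := by
        rw [lprod_cons, ← mul_assoc, base_mul_of, ← hdl, lprod_append, lprod_cons, lprod_nil,
          mul_one]
      have hxconj : IsConj (lprod φ mid * PushoutI.of (φ := φ) j (c * (φ j k * a)))
          (base φ k * lprod φ (⟨j, a⟩ :: rest)) := by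
        rw [isConj_iff]
        refine ⟨PushoutI.of (φ := φ) j (φ j k * a), ?_⟩
        have hsplit : PushoutI.of (φ := φ) j (c * (φ j k * a)) =
            PushoutI.of (φ := φ) j c * PushoutI.of (φ := φ) j (φ j k * a) :=
          map_mul (PushoutI.of (φ := φ) j) c _
        rw [hlprodl, hsplit]
        group
      obtain ⟨m, hm, hpow⟩ := hord
      have hpow' : (lprod φ mid * PushoutI.of (φ := φ) j (c * (φ j k * a))) ^ m = 1 :=
        pow_eq_one_of_isConj hxconj hpow
      have hrl : mid.length + 1 = rest.length := by
        conv_rhs => rw [← hdl]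
        simp
      have hrestlen : rest.length ≤ n := by
        simp only [List.length_cons] at hlen; omega
      have hredmid : ∀ x ∈ mid, x.2 ∉ (φ x.1).range := by
        intro x hxm
        refine hred x (List.mem_cons_of_mem _ ?_)
        rw [← hdl]
        exact List.mem_append_left _ hxm
      by_cases hx : c * (φ j k * a) ∈ (φ j).range
      · obtain ⟨k', hk'⟩ := hx
        have hgx : PushoutI.of (φ := φ) j (c * (φ j k * a)) = base φ k' := by
          rw [← hk', of_apply_eq_base]
        have hconj2 : IsConj (base φ k' * lprod φ mid)
            (lprod φ mid * PushoutI.of (φ := φ) j (c * (φ j k * a))) := by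
          rw [isConj_iff]
          exact ⟨(base φ k')⁻¹, by rw [hgx]; group⟩
        have hmidlen : mid.length ≤ n := by omega
        obtain ⟨b, h, hc⟩ := ih mid hmidlen hchmid hredmid k'
          ⟨m, hm, pow_eq_one_of_isConj hconj2 hpow'⟩
        exact ⟨b, h, hc.trans (hconj2.trans hxconj)⟩
      · have hchl'' : (mid ++ [(⟨j, c * (φ j k * a)⟩ : Σ b, H b)]).Chain'
            (fun x y => x.1 ≠ y.1) := by
          apply List.isChain_append.mpr
          refine ⟨hchmid, List.isChain_singleton _, ?_⟩
          intro p hp q hq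
          simp only [List.head?_cons, Option.mem_def, Option.some_inj] at hq
          subst hq
          exact hjunc p hp ⟨j, c⟩ rfl
        have hredl'' : ∀ x ∈ mid ++ [(⟨j, c * (φ j k * a)⟩ : Σ b, H b)],
            x.2 ∉ (φ x.1).range := by
          intro x hxm
          rcases List.mem_append.mp hxm with hmm | hmm
          · exact hredmid x hmm
          · simp only [List.mem_singleton] at hmm
            subst hmm
            exact hx
        have hlen'' : (mid ++ [(⟨j, c * (φ j k * a)⟩ : Σ b, H b)]).length ≤ n := by
          simp only [List.length_append, List.length_singleton]
          omega
        have heq : base φ (1 : K) * lprod φ (mid ++ [(⟨j, c * (φ j k * a)⟩ : Σ b, H b)]) =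
            lprod φ mid * PushoutI.of (φ := φ) j (c * (φ j k * a)) := by
          rw [map_one, one_mul, lprod_append, lprod_cons, lprod_nil, mul_one]
        obtain ⟨b, h, hc⟩ := ih _ hlen'' hchl'' hredl'' 1 ⟨m, hm, by rw [heq]; exact hpow'⟩
        refine ⟨b, h, ?_⟩
        rw [heq] at hc
        exact hc.trans hxconj
    · -- cyclically reduced: contradiction
      exfalso
      have hch' : (⟨i, φ i k * a⟩ :: rest : List (Σ b, H b)).Chain' (fun x y => x.1 ≠ y.1) :=
        List.isChain_cons.mpr ⟨(List.isChain_cons.mp hch).1, hchrest⟩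
      have hred' : ∀ x ∈ (⟨i, φ i k * a⟩ :: rest : List (Σ b, H b)), x.2 ∉ (φ x.1).range := by
        intro x hxm
        rcases List.mem_cons.mp hxm with hmm | hmm
        · subst hmm
          exact phi_mul_not_mem k (hred ⟨i, a⟩ (List.mem_cons_self))
        · exact hred x (List.mem_cons_of_mem _ hmm)
      have hne' : (⟨i, φ i k * a⟩ :: rest : List (Σ b, H b)) ≠ [] := List.cons_ne_nil _ _
      have hfl' : ((⟨i, φ i k * a⟩ :: rest : List (Σ b, H b)).head hne').1 ≠
          ((⟨i, φ i k * a⟩ :: rest : List (Σ b, H b)).getLast hne').1 := by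
        rw [List.getLast_cons hrne, hlr]
        exact fun hh => hij hh.symm
      have heq : base φ k * lprod φ (⟨i, a⟩ :: rest) =
          lprod φ (⟨i, φ i k * a⟩ :: rest) := by
        rw [lprod_cons, lprod_cons, ← mul_assoc, base_mul_of]
      obtain ⟨m, hm, hpow⟩ := hord
      rw [heq] at hpow
      exact lprod_pow_ne_one hinj hch' hred' hne' hfl' m hm hpow

lemma exists_rep (hinj : ∀ b, Function.Injective (φ b)) (g : PushoutI φ) :
    ∃ (k : K) (l : List (Σ b, H b)), l.Chain' (fun x y => x.1 ≠ y.1) ∧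
      (∀ x ∈ l, x.2 ∉ (φ x.1).range) ∧ g = base φ k * lprod φ l := by
  classical
  obtain ⟨d⟩ := NormalWord.transversal_nonempty φ hinj
  set w : NormalWord d := NormalWord.equiv g with hw
  refine ⟨w.head, w.toList, w.toWord.chain_ne, ?_, ?_⟩
  · rintro ⟨i, gg⟩ hx ⟨k', hk'⟩
    have hset : gg ∈ d.set i := w.normalized i gg hx
    have hne1 : gg ≠ 1 := w.toWord.ne_one ⟨i, gg⟩ hx
    have h12 : ((⟨φ i k', by exact ⟨k', rfl⟩⟩ : ((φ i).range : Set (H i))),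
          (⟨1, d.one_mem i⟩ : d.set i)) =
        ((⟨1, by exact one_mem _⟩ : ((φ i).range : Set (H i))),
          (⟨gg, hset⟩ : d.set i)) := by
      apply (d.compl i).injective
      simp [hk']
    have := congrArg (fun p => (p.2 : H i)) h12
    exact hne1 this.symm
  · have hg : g = w.prod := by
      conv_lhs => rw [← (NormalWord.equiv (d := d)).symm_apply_apply g]
      rfl
    rw [hg]
    show base φ w.head * ofCoprodI w.toWord.prod = _
    rw [ofCoprodI_word_prod]

end TorsionAmalgamHelper

/-- In a nondegenerate amalgamated free product `G = H₁ ∗_K H₂`,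
every element of finite order is conjugate to an element of (the image of) one of
the factors.  Consequently, if both factors are torsion free, then so is `G`. -/
theorem torsion_of_amalgamated_free_product
    {K : Type} [Group K] {H : Bool → Type} [∀ b, Group (H b)]
    (φ : ∀ b, K →* H b)
    (hinj : ∀ b, Function.Injective (φ b))
    (hproper : ∀ b, ¬ Function.Surjective (φ b)) :
    (∀ g : PushoutI φ, (∃ n : ℕ, 1 ≤ n ∧ g ^ n = 1) →
        ∃ (b : Bool) (h : H b), IsConj (PushoutI.of (φ := φ) b h) g)
      ∧ ((∀ b, Monoid.IsTorsionFree (H b)) → Monoid.IsTorsionFree (PushoutI φ)) := by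
  open TorsionAmalgamHelper in
  have main : ∀ g : PushoutI φ, (∃ n : ℕ, 1 ≤ n ∧ g ^ n = 1) →
      ∃ (b : Bool) (h : H b), IsConj (PushoutI.of (φ := φ) b h) g := by
    intro g hg
    obtain ⟨k, l, hch, hred, rfl⟩ := exists_rep hinj g
    exact conj_of_finite_order hinj l.length l le_rfl hch hred k hg
  refine ⟨main, ?_⟩
  intro htf g hg1 hfin
  obtain ⟨n, hn, hgn⟩ := isOfFinOrder_iff_pow_eq_one.mp hfin
  obtain ⟨b, h, hconj⟩ := main g ⟨n, hn, hgn⟩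
  obtain ⟨c, hc⟩ := isConj_iff.mp hconj
  have hpow : PushoutI.of (φ := φ) b h ^ n = 1 := by
    have : (c * PushoutI.of (φ := φ) b h * c⁻¹) ^ n = 1 := by rw [hc]; exact hgn
    rw [conj_pow] at this
    have := congrArg (fun z => c⁻¹ * z * c) this
    simpa [mul_assoc] using this
  have hh1 : h = 1 := by
    by_contra hh
    exact htf b h hh (isOfFinOrder_iff_pow_eq_one.mpr ⟨n, hn, by
      apply Monoid.PushoutI.of_injective hinj b
      rw [map_pow, hpow, map_one]⟩)
  apply hg1
  rw [← hc, hh1, map_one, mul_one, mul_inv_cancel]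
end

section
/- Let G = H₁ ∗_K H₂ be an amalgamated free product. If w = (β₁, …, β_l) and w' = (β₁', …, β_k') are two reduced syllabic expressions of the same element α ∈ G, then k = l and there exist γ₀, γ₁, …, γ_l ∈ K with γ₀ = γ_l = 1 and β_i' γ_i = γ_{i-1} β_i for all i. In particular, α = 1 if and only if its reduced expression is the empty sequence. -/
open Monoid

/-- The element of the amalgamated free product represented by a syllabic expression,
i.e. a list of syllables, each lying in one of the two factors. -/
def syllProd {K : Type} [Group K] {H : Bool → Type} [∀ b, Group (H b)]
    (φ : ∀ b, K →* H b) (w : List ((b : Bool) × H b)) : PushoutI φ :=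
  (w.map fun β => PushoutI.of (φ := φ) β.1 β.2).prod

/-- A syllabic expression is reduced if it is empty, or is a single nontrivial syllable,
or consecutive syllables lie in different factors and no syllable lies in (the image of)
the amalgamated subgroup `K`. -/
def IsReducedSyll {K : Type} [Group K] {H : Bool → Type} [∀ b, Group (H b)]
    (φ : ∀ b, K →* H b) (w : List ((b : Bool) × H b)) : Prop :=
  w = [] ∨ (∃ β : (b : Bool) × H b, w = [β] ∧ β.2 ≠ 1) ∨
    (w.Chain' (fun β β' => β.1 ≠ β'.1) ∧ ∀ β ∈ w, β.2 ∉ Set.range (φ β.1))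


open PushoutI

section
variable {K : Type} [Group K] {H : Bool → Type} [∀ b, Group (H b)] (φ : ∀ b, K →* H b)

/-- inverse of a syllable -/
abbrev sinv (β : (b : Bool) × H b) : (b : Bool) × H b := ⟨β.1, β.2⁻¹⟩

abbrev Strong (w : List ((b : Bool) × H b)) : Prop :=
  w.Chain' (fun β β' => β.1 ≠ β'.1) ∧ ∀ β ∈ w, β.2 ∉ Set.range (φ β.1)

lemma syllProd_nil : syllProd φ [] = 1 := rfl

lemma syllProd_cons (β) (w) :
    syllProd φ (β :: w) = PushoutI.of (φ := φ) β.1 β.2 * syllProd φ w := by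
  simp [syllProd]

lemma syllProd_append (u v) : syllProd φ (u ++ v) = syllProd φ u * syllProd φ v := by
  simp [syllProd]

lemma syllProd_revinv (w) :
    syllProd φ (w.reverse.map sinv) = (syllProd φ w)⁻¹ := by
  induction w with
  | nil => simp [syllProd]
  | cons β t ih =>
      rw [List.reverse_cons, List.map_append, syllProd_append, ih, syllProd_cons]
      simp [syllProd, mul_inv_rev]

lemma strong_revinv {w} (hs : Strong φ w) : Strong φ (w.reverse.map sinv) := by
  constructor
  · rw [List.Chain', List.isChain_map, List.isChain_reverse]
    exact hs.1.imp fun a b h => h.symm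
  · rintro β hβ
    simp only [List.mem_map, List.mem_reverse] at hβ
    obtain ⟨y, hy, rfl⟩ := hβ
    rintro ⟨k, hk⟩
    exact hs.2 y hy ⟨k⁻¹, by simpa using congrArg (·⁻¹) hk⟩

lemma strong_eq_nil (hinj : ∀ b, Function.Injective (φ b)) {w} (hs : Strong φ w)
    (h : syllProd φ w ∈ (PushoutI.base φ).range) : w = [] := by
  have hne : ∀ l ∈ w, Sigma.snd l ≠ 1 := fun l hl h1 =>
    hs.2 l hl (h1 ▸ ⟨1, map_one _⟩)
  have hred : PushoutI.Reduced φ (⟨w, hne, hs.1⟩ : CoprodI.Word H) := by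
    intro g hg hgr
    exact hs.2 g hg (by rcases hgr with ⟨k, hk⟩; exact ⟨k, hk⟩)
  have hprod : ofCoprodI ((⟨w, hne, hs.1⟩ : CoprodI.Word H).prod) = syllProd φ w := by
    simp [CoprodI.Word.prod, syllProd, map_list_prod, List.map_map, Function.comp_def]
  have := hred.eq_empty_of_mem_range hinj (by rw [hprod]; exact h)
  simpa [CoprodI.Word.empty] using congrArg CoprodI.Word.toList this

lemma head_cancel (hinj : ∀ b, Function.Injective (φ b)) {β β' : (b : Bool) × H b}
    {t t' : List ((b : Bool) × H b)}
    (hs : Strong φ (β :: t)) (hs' : Strong φ (β' :: t'))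
    (heq : syllProd φ (β :: t) = syllProd φ (β' :: t')) :
    ∃ γ₁ : K, PushoutI.of (φ := φ) β.1 β.2
      = PushoutI.of (φ := φ) β'.1 β'.2 * PushoutI.base φ γ₁ := by
  have ht' : Strong φ t' := ⟨hs'.1.tail, fun x hx => hs'.2 x (List.mem_cons_of_mem _ hx)⟩
  have ht : Strong φ t := ⟨hs.1.tail, fun x hx => hs.2 x (List.mem_cons_of_mem _ hx)⟩
  have hlast : ∀ x ∈ (t'.reverse.map sinv).getLast?, x.1 ≠ β'.1 := by
    intro x hx
    rw [List.getLast?_map, List.getLast?_reverse] at hx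
    simp only [Option.mem_def, Option.map_eq_some_iff] at hx
    obtain ⟨y, hy, rfl⟩ := hx
    exact fun h => (List.isChain_cons.1 hs'.1).1 y hy h.symm
  have hrevstrong : Strong φ (t'.reverse.map sinv) := strong_revinv φ ht'
  -- step 1 : β.1 = β'.1
  have hb : β.1 = β'.1 := by
    by_contra hne
    have hu : Strong φ ((t'.reverse.map sinv) ++ (sinv β' :: β :: t)) := by
      constructor
      · rw [List.Chain', List.isChain_append]
        refine ⟨hrevstrong.1, ?_, ?_⟩
        · exact List.isChain_cons_cons.2 ⟨fun h => hne (h.symm), hs.1⟩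
        · intro x hx y hy
          simp only [Option.mem_def, List.head?_cons, Option.some.injEq] at hy
          subst hy
          exact hlast x hx
      · intro x hx
        rcases List.mem_append.1 hx with h | h
        · exact hrevstrong.2 x h
        · rcases List.mem_cons.1 h with h | h
          · subst h
            rintro ⟨k, hk⟩
            exact hs'.2 β' (List.mem_cons_self) ⟨k⁻¹, by simpa using congrArg (·⁻¹) hk⟩
          · rcases List.mem_cons.1 h with h | h
            · exact hs.2 x (h ▸ List.mem_cons_self)
            · exact hs.2 x (List.mem_cons_of_mem _ h)
    have hprod : syllProd φ ((t'.reverse.map sinv) ++ (sinv β' :: β :: t)) = 1 := by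
      have : (t'.reverse.map sinv) ++ (sinv β' :: β :: t)
          = ((β' :: t').reverse.map sinv) ++ (β :: t) := by
        simp [List.reverse_cons]
      rw [this, syllProd_append, syllProd_revinv, ← heq, inv_mul_cancel]
    have := strong_eq_nil φ hinj hu (hprod ▸ ⟨1, by simp⟩)
    simp at this
  -- step 2 : the quotient is in the range
  obtain ⟨b, g⟩ := β
  obtain ⟨b', g'⟩ := β'
  dsimp at hb
  subst hb
  by_cases h1 : g'⁻¹ * g = 1
  · exact ⟨1, by rw [map_one, mul_one, inv_mul_eq_one.1 h1]⟩
  by_cases h2 : g'⁻¹ * g ∈ Set.range (φ b)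
  · obtain ⟨γ₁, hγ₁⟩ := h2
    refine ⟨γ₁, ?_⟩
    rw [← of_apply_eq_base φ b, ← map_mul, hγ₁, mul_inv_cancel_left]
  · exfalso
    have hu : Strong φ ((t'.reverse.map sinv) ++ (⟨b, g'⁻¹ * g⟩ :: t)) := by
      constructor
      · rw [List.Chain', List.isChain_append]
        refine ⟨hrevstrong.1, List.isChain_cons.2 ⟨?_, ht.1⟩, ?_⟩
        · intro y hy
          exact (List.isChain_cons.1 hs.1).1 y hy
        · intro x hx y hy
          simp only [Option.mem_def, List.head?_cons, Option.some.injEq] at hy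
          subst hy
          exact hlast x hx
      · intro x hx
        rcases List.mem_append.1 hx with h | h
        · exact hrevstrong.2 x h
        · rcases List.mem_cons.1 h with h | h
          · subst h; exact h2
          · exact hs.2 x (List.mem_cons_of_mem _ h)
    have hprod : syllProd φ ((t'.reverse.map sinv) ++ (⟨b, g'⁻¹ * g⟩ :: t)) = 1 := by
      rw [syllProd_append, syllProd_revinv, syllProd_cons]
      have : PushoutI.of (φ := φ) b (g'⁻¹ * g)
          = (PushoutI.of (φ := φ) b g')⁻¹ * PushoutI.of (φ := φ) b g := by
        rw [map_mul, map_inv]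
      rw [this]
      have heq' : PushoutI.of (φ := φ) b g * syllProd φ t
          = PushoutI.of (φ := φ) b g' * syllProd φ t' := by
        simpa [syllProd_cons] using heq
      group
      rw [mul_assoc, heq']
      group
    have := strong_eq_nil φ hinj hu (hprod ▸ ⟨1, by simp⟩)
    simp at this

lemma syllProd_nil_mem_range : syllProd φ [] ∈ (PushoutI.base φ).range :=
  ⟨1, by simp [syllProd]⟩

lemma main_lemma (hinj : ∀ b, Function.Injective (φ b)) :
    ∀ (n : ℕ) (w w' : List ((b : Bool) × H b)), w.length ≤ n →
      Strong φ w → Strong φ w' → syllProd φ w = syllProd φ w' →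
      w'.length = w.length ∧ ∃ γ : ℕ → K, γ 0 = 1 ∧ γ w.length = 1 ∧
        ∀ i, i < w.length →
          PushoutI.of (φ := φ) (w'.getD i ⟨true, 1⟩).1 (w'.getD i ⟨true, 1⟩).2
              * PushoutI.base φ (γ (i + 1))
            = PushoutI.base φ (γ i)
              * PushoutI.of (φ := φ) (w.getD i ⟨true, 1⟩).1 (w.getD i ⟨true, 1⟩).2 := by
  intro n
  induction n with
  | zero =>
    intro w w' hlen hs hs' heq
    have hw : w = [] := List.length_eq_zero_iff.1 (Nat.le_zero.1 hlen)
    subst hw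
    have hw' : w' = [] := strong_eq_nil φ hinj hs' (by
      rw [← heq]; exact syllProd_nil_mem_range φ)
    subst hw'
    exact ⟨rfl, fun _ => 1, rfl, rfl, fun i hi => absurd hi (Nat.not_lt_zero i)⟩
  | succ n ih =>
    intro w w' hlen hs hs' heq
    rcases w with _ | ⟨β, t⟩
    · have hw' : w' = [] := strong_eq_nil φ hinj hs' (by
        rw [← heq]; exact syllProd_nil_mem_range φ)
      subst hw'
      exact ⟨rfl, fun _ => 1, rfl, rfl, fun i hi => absurd hi (Nat.not_lt_zero i)⟩
    rcases w' with _ | ⟨β', t'⟩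
    · exfalso
      have : β :: t = [] := strong_eq_nil φ hinj hs (by
        rw [heq]; exact syllProd_nil_mem_range φ)
      simp at this
    obtain ⟨γ₁, hγ₁⟩ := head_cancel φ hinj hs hs' heq
    have ht : Strong φ t := ⟨hs.1.tail, fun x hx => hs.2 x (List.mem_cons_of_mem _ hx)⟩
    have ht' : Strong φ t' := ⟨hs'.1.tail, fun x hx => hs'.2 x (List.mem_cons_of_mem _ hx)⟩
    rcases t with _ | ⟨h, t₂⟩
    · -- w = [β]
      have hpt' : syllProd φ t' = PushoutI.base φ γ₁ := by
        have h1 : PushoutI.of (φ := φ) β'.1 β'.2 * syllProd φ t'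
            = PushoutI.of (φ := φ) β'.1 β'.2 * PushoutI.base φ γ₁ := by
          rw [← hγ₁]
          simpa [syllProd_cons, syllProd_nil] using heq.symm
        exact mul_left_cancel h1
      have ht'nil : t' = [] := strong_eq_nil φ hinj ht' ⟨γ₁, hpt'.symm⟩
      subst ht'nil
      have hγ1 : γ₁ = 1 := base_injective hinj (by
        rw [← hpt', map_one]; simp [syllProd])
      refine ⟨rfl, fun _ => 1, rfl, rfl, ?_⟩
      intro i hi
      obtain rfl : i = 0 := Nat.lt_one_iff.1 (by simpa using hi)
      rw [List.getD_cons_zero, List.getD_cons_zero]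
      simp only [List.getD_cons_zero, map_one, mul_one, one_mul]
      rw [hγ₁, hγ1, map_one, mul_one]
    · -- w = β :: h :: t₂
      have hsw₂ : Strong φ (⟨h.1, φ h.1 γ₁ * h.2⟩ :: t₂) := by
        constructor
        · exact List.isChain_cons.2 ⟨(List.isChain_cons.1 ht.1).1, (List.isChain_cons.1 ht.1).2⟩
        · intro x hx
          rcases List.mem_cons.1 hx with hx | hx
          · subst hx
            rintro ⟨k, hk⟩
            exact ht.2 h (List.mem_cons_self)
              ⟨γ₁⁻¹ * k, by rw [map_mul, map_inv, hk]; group⟩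
          · exact ht.2 x (List.mem_cons_of_mem _ hx)
      have hofw₂ : PushoutI.of (φ := φ) h.1 (φ h.1 γ₁ * h.2)
          = PushoutI.base φ γ₁ * PushoutI.of (φ := φ) h.1 h.2 := by
        rw [map_mul, of_apply_eq_base]
      have hp : syllProd φ (⟨h.1, φ h.1 γ₁ * h.2⟩ :: t₂) = syllProd φ t' := by
        have h1 : PushoutI.of (φ := φ) β'.1 β'.2
              * syllProd φ (⟨h.1, φ h.1 γ₁ * h.2⟩ :: t₂)
            = PushoutI.of (φ := φ) β'.1 β'.2 * syllProd φ t' := by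
          calc PushoutI.of (φ := φ) β'.1 β'.2
                * syllProd φ (⟨h.1, φ h.1 γ₁ * h.2⟩ :: t₂)
              = (PushoutI.of (φ := φ) β'.1 β'.2 * PushoutI.base φ γ₁)
                  * (PushoutI.of (φ := φ) h.1 h.2 * syllProd φ t₂) := by
                rw [syllProd_cons, hofw₂]; group
            _ = syllProd φ (β :: h :: t₂) := by
                rw [← hγ₁, syllProd_cons, syllProd_cons]
            _ = syllProd φ (β' :: t') := heq
            _ = PushoutI.of (φ := φ) β'.1 β'.2 * syllProd φ t' := syllProd_cons φ _ _
        exact mul_left_cancel h1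
      have hlen₂ : (⟨h.1, φ h.1 γ₁ * h.2⟩ :: t₂).length ≤ n := by
        simp only [List.length_cons] at hlen ⊢
        omega
      obtain ⟨hlen', γ', hγ'0, hγ'end, hrel⟩ := ih _ t' hlen₂ hsw₂ ht' hp
      refine ⟨?_, ?_⟩
      · simp only [List.length_cons] at hlen' ⊢
        omega
      · refine ⟨fun i => match i with | 0 => 1 | 1 => γ₁ | (j+2) => γ' (j+1), rfl, ?_, ?_⟩
        · show γ' (t₂.length + 1) = 1
          simpa using hγ'end
        · intro i hi
          match i, hi with
          | 0, _ =>
            rw [List.getD_cons_zero, List.getD_cons_zero]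
            simp only [List.getD_cons_zero, map_one, one_mul]
            rw [hγ₁]
          | 1, hi =>
            have h0 := hrel 0 (by simp)
            rw [List.getD_cons_zero] at h0
            simp only [List.getD_cons_zero, hγ'0, map_one, one_mul, hofw₂] at h0
            exact h0
          | (j+2), hi =>
            have hj := hrel (j+1) (by
              simp only [List.length_cons] at hi ⊢
              omega)
            exact hj

lemma prod_ne_one_single (hinj : ∀ b, Function.Injective (φ b))
    {β : (b : Bool) × H b} (hβ : β.2 ≠ 1) : syllProd φ [β] ≠ 1 := by
  intro h
  have hof : PushoutI.of (φ := φ) β.1 β.2 = 1 := by simpa [syllProd] using h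
  by_cases hr : β.2 ∈ Set.range (φ β.1)
  · obtain ⟨k, hk⟩ := hr
    have hb1 : PushoutI.base φ k = 1 := by
      rw [← of_apply_eq_base φ β.1, hk, hof]
    have hk1 : k = 1 := base_injective hinj (by rw [hb1, map_one])
    exact hβ (by rw [← hk, hk1, map_one])
  · have hstr : Strong φ [β] := ⟨List.isChain_singleton _, by simpa using hr⟩
    have := strong_eq_nil φ hinj hstr (by rw [h]; exact ⟨1, by simp⟩)
    simp at this

lemma prod_eq_one_iff (hinj : ∀ b, Function.Injective (φ b))
    {w : List ((b : Bool) × H b)} (hw : IsReducedSyll φ w) :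
    syllProd φ w = 1 ↔ w = [] := by
  constructor
  · intro h
    rcases hw with rfl | ⟨β, rfl, hβ⟩ | hstrong
    · rfl
    · exact absurd h (prod_ne_one_single φ hinj hβ)
    · exact strong_eq_nil φ hinj hstrong (by rw [h]; exact ⟨1, by simp⟩)
  · rintro rfl; rfl

lemma classify {w : List ((b : Bool) × H b)} (hw : IsReducedSyll φ w) :
    Strong φ w ∨ ∃ β : (b : Bool) × H b,
      w = [β] ∧ β.2 ≠ 1 ∧ β.2 ∈ Set.range (φ β.1) := by
  rcases hw with rfl | ⟨β, rfl, hβ⟩ | h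
  · exact Or.inl ⟨List.isChain_nil, by simp⟩
  · by_cases hr : β.2 ∈ Set.range (φ β.1)
    · exact Or.inr ⟨β, rfl, hβ, hr⟩
    · exact Or.inl ⟨List.isChain_singleton _, by simpa using hr⟩
  · exact Or.inl h

end

/-- Two reduced syllabic expressions of the same element of an
amalgamated free product have the same length and differ by an interleaved sequence of
elements of `K`; in particular an element is trivial iff its reduced expression is empty. -/
theorem reduced_syllabic_expressions_unique
    {K : Type} [Group K] {H : Bool → Type} [∀ b, Group (H b)]
    (φ : ∀ b, K →* H b)
    (hinj : ∀ b, Function.Injective (φ b))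
    (w w' : List ((b : Bool) × H b))
    (hw : IsReducedSyll φ w) (hw' : IsReducedSyll φ w')
    (heq : syllProd φ w = syllProd φ w') :
    w'.length = w.length
      ∧ (∃ γ : ℕ → K, γ 0 = 1 ∧ γ w.length = 1 ∧
          ∀ i, i < w.length →
            PushoutI.of (φ := φ) (w'.getD i ⟨true, 1⟩).1 (w'.getD i ⟨true, 1⟩).2
                * PushoutI.base φ (γ (i + 1))
              = PushoutI.base φ (γ i)
                * PushoutI.of (φ := φ) (w.getD i ⟨true, 1⟩).1 (w.getD i ⟨true, 1⟩).2)
      ∧ (syllProd φ w = 1 ↔ w = []) := by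
  rcases classify φ hw with hsw | ⟨β, rfl, hβ, hr⟩
  · rcases classify φ hw' with hsw' | ⟨β', rfl, hβ', hr'⟩
    · obtain ⟨h1, γ, h2, h3, h4⟩ := main_lemma φ hinj w.length w w' le_rfl hsw hsw' heq
      exact ⟨h1, ⟨γ, h2, h3, h4⟩, prod_eq_one_iff φ hinj hw⟩
    · exfalso
      obtain ⟨k, hk⟩ := hr'
      have hone : syllProd φ [β'] = PushoutI.base φ k := by
        have hβ'prod : syllProd φ [β'] = PushoutI.of (φ := φ) β'.1 β'.2 := by
          simp [syllProd]
        rw [hβ'prod, ← hk, of_apply_eq_base]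
      have hnil := strong_eq_nil φ hinj hsw ⟨k, by rw [← hone, ← heq]⟩
      subst hnil
      exact prod_ne_one_single φ hinj hβ' (by simpa [syllProd] using heq.symm)
  · rcases classify φ hw' with hsw' | ⟨β', rfl, hβ', hr'⟩
    · exfalso
      obtain ⟨k, hk⟩ := hr
      have hone : syllProd φ [β] = PushoutI.base φ k := by
        have hβprod : syllProd φ [β] = PushoutI.of (φ := φ) β.1 β.2 := by
          simp [syllProd]
        rw [hβprod, ← hk, of_apply_eq_base]
      have hnil := strong_eq_nil φ hinj hsw' ⟨k, by rw [← hone, heq]⟩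
      subst hnil
      exact prod_ne_one_single φ hinj hβ (by simpa [syllProd] using heq)
    · refine ⟨rfl, ⟨fun _ => 1, rfl, rfl, ?_⟩, prod_eq_one_iff φ hinj hw⟩
      intro i hi
      obtain rfl : i = 0 := Nat.lt_one_iff.1 (by simpa using hi)
      rw [List.getD_cons_zero, List.getD_cons_zero]
      simp only [List.getD_cons_zero, map_one, mul_one, one_mul]
      simpa [syllProd] using heq.symm
end

section
/- Let G = H₁ ∗_K H₂ where H₁, H₂, K are finitely generated with finite generating sets S₁, S₂, T respectively. Suppose for each j ∈ {1,2}: (a) H_j has decidable word problem, and (b) there is an algorithm which, given a word w over S_j ∪ S_j^{-1}, decides whether the element β it represents lies in K and, if so, computes a word over T ∪ T^{-1} representing β. Then G has decidable word problem. -/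
set_option maxHeartbeats 1000000

open Monoid

/-- The evaluation in a group `G` of a word over a generating family `g : ι → G` and
formal inverses: a letter `(i, true)` is read as `g i` and `(i, false)` as `(g i)⁻¹`. -/
def evalWord {G : Type} [Group G] {ι : Type} (g : ι → G) (w : List (ι × Bool)) : G :=
  (w.map fun p => if p.2 then g p.1 else (g p.1)⁻¹).prod

namespace AmalgamWP

theorem evalWord_nil {G : Type} [Group G] {ι : Type} (g : ι → G) :
    evalWord g [] = 1 := rfl

theorem evalWord_cons {G : Type} [Group G] {ι : Type} (g : ι → G) (p : ι × Bool)
    (w : List (ι × Bool)) :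
    evalWord g (p :: w) = (if p.2 then g p.1 else (g p.1)⁻¹) * evalWord g w := by
  simp [evalWord]

theorem evalWord_append {G : Type} [Group G] {ι : Type} (g : ι → G)
    (u v : List (ι × Bool)) :
    evalWord g (u ++ v) = evalWord g u * evalWord g v := by
  simp [evalWord]

theorem evalWord_inv {G : Type} [Group G] {ι : Type} (g : ι → G) (u : List (ι × Bool)) :
    evalWord g (u.reverse.map fun p => (p.1, !p.2)) = (evalWord g u)⁻¹ := by
  induction u with
  | nil => simp [evalWord]
  | cons p w ih =>
    rw [evalWord_cons, List.reverse_cons, List.map_append, evalWord_append, ih]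
    cases p with
    | mk i b => cases b <;> simp [evalWord]

theorem exists_evalWord_eq {G : Type} [Group G] {n : ℕ} {g : Fin n → G}
    (hg : Subgroup.closure (Set.range g) = ⊤) (x : G) :
    ∃ w : List (Fin n × Bool), evalWord g w = x := by
  have hx : x ∈ Subgroup.closure (Set.range g) := hg ▸ Subgroup.mem_top x
  induction hx using Subgroup.closure_induction with
  | mem y hy =>
    obtain ⟨i, rfl⟩ := hy
    exact ⟨[(i, true)], by simp [evalWord]⟩
  | one => exact ⟨[], rfl⟩
  | mul a b _ _ iha ihb =>
    obtain ⟨u, rfl⟩ := iha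
    obtain ⟨v, rfl⟩ := ihb
    exact ⟨u ++ v, evalWord_append g u v⟩
  | inv a _ iha =>
    obtain ⟨u, rfl⟩ := iha
    exact ⟨(u.reverse.map fun p => (p.1, !p.2)), evalWord_inv g u⟩

/-- A `Computable` version of `List.foldr`. -/
theorem computable_list_foldr {α β σ : Type} [Primcodable α] [Primcodable β] [Primcodable σ]
    {f : α → List β} {g : α → σ} {h : α → β × σ → σ}
    (hf : Computable f) (hg : Computable g) (hh : Computable₂ h) :
    Computable fun a => (f a).foldr (fun b s => h a (b, s)) (g a) := by
  have ho : Computable fun q : α × ℕ × σ => (f q.1)[(f q.1).length - (q.2.1 + 1)]? :=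
    Computable.list_getElem?.comp (hf.comp Computable.fst)
      (Primrec.nat_sub.to_comp.comp (Computable.list_length.comp (hf.comp Computable.fst))
        (Computable.succ.comp (Computable.fst.comp Computable.snd)))
  have hstep : Computable₂ fun (a : α) (p : ℕ × σ) =>
      ((f a)[(f a).length - (p.1 + 1)]?).elim p.2 (fun b => h a (b, p.2)) := by
    show Computable fun q : α × ℕ × σ =>
      ((f q.1)[(f q.1).length - (q.2.1 + 1)]?).elim q.2.2 (fun b => h q.1 (b, q.2.2))
    have := Computable.option_casesOn (α := α × ℕ × σ)
      (g := fun q b => h q.1 (b, q.2.2)) ho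
      (Computable.snd.comp Computable.snd)
      (Computable.to₂ (hh.comp (Computable.fst.comp Computable.fst)
        (Computable.pair Computable.snd
          (Computable.snd.comp (Computable.snd.comp Computable.fst)))))
    refine this.of_eq fun q => ?_
    cases (f q.1)[(f q.1).length - (q.2.1 + 1)]? <;> rfl
  have hmain := Computable.nat_rec (Computable.list_length.comp hf) hg hstep
  refine hmain.of_eq fun a => ?_
  have key : ∀ n : ℕ, n ≤ (f a).length →
      (Nat.rec (motive := fun _ => σ) (g a)
        (fun y IH => ((f a)[(f a).length - (y + 1)]?).elim IH
          (fun b => h a (b, IH))) n : σ) =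
      ((f a).drop ((f a).length - n)).foldr (fun b s => h a (b, s)) (g a) := by
    intro n hn
    induction n with
    | zero => simp
    | succ n ih =>
      have hn' : n ≤ (f a).length := Nat.le_of_succ_le hn
      have hlt : (f a).length - (n + 1) < (f a).length := by omega
      have hred : (Nat.rec (motive := fun _ => σ) (g a)
          (fun y IH => ((f a)[(f a).length - (y + 1)]?).elim IH
            (fun b => h a (b, IH))) (n + 1) : σ) =
          ((f a)[(f a).length - (n + 1)]?).elim
            (Nat.rec (motive := fun _ => σ) (g a)
              (fun y IH => ((f a)[(f a).length - (y + 1)]?).elim IH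
                (fun b => h a (b, IH))) n)
            (fun b => h a (b, Nat.rec (motive := fun _ => σ) (g a)
              (fun y IH => ((f a)[(f a).length - (y + 1)]?).elim IH
                (fun b => h a (b, IH))) n)) := rfl
      have hdrop : (f a).drop ((f a).length - (n + 1)) =
          (f a).get ⟨(f a).length - (n + 1), hlt⟩ :: (f a).drop ((f a).length - n) := by
        rw [List.drop_eq_getElem_cons hlt]
        congr 2
        omega
      rw [hred, List.getElem?_eq_getElem hlt, ih hn', hdrop, List.get_eq_getElem, List.foldr_cons, Option.elim]
  have := key (f a).length le_rfl
  rw [Nat.sub_self, List.drop_zero] at this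
  exact this

/-! ### The algorithm -/

variable {n₁ n₂ m : ℕ}

abbrev Ltr (n : ℕ) : Type := Fin n × Bool
abbrev Blk (n₁ n₂ : ℕ) : Type := List (Ltr n₁) ⊕ List (Ltr n₂)
abbrev St (n₁ n₂ m : ℕ) : Type := List (Ltr m) × List (Blk n₁ n₂)

variable (fm1 : List (Ltr n₁) → Option (List (Ltr m)))
  (fm2 : List (Ltr n₂) → Option (List (Ltr m)))
  (t1 : Ltr m → List (Ltr n₁)) (t2 : Ltr m → List (Ltr n₂))
  (f1 : List (Ltr n₁) → Bool)

def pushCore {γ : Type} (fm : List γ → Option (List (Ltr m)))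
    (mk : List γ → Blk n₁ n₂) (w : List γ) (r : List (Blk n₁ n₂)) : St n₁ n₂ m :=
  match fm w with
  | some u => (u, r)
  | none => ([], mk w :: r)

def push (x : Ltr n₁ ⊕ Ltr n₂) (st : St n₁ n₂ m) : St n₁ n₂ m :=
  match x with
  | .inl a =>
    match st.2 with
    | .inl h :: r' => pushCore fm1 .inl ((a :: st.1.flatMap t1) ++ h) r'
    | r => pushCore fm1 .inl (a :: st.1.flatMap t1) r
  | .inr a =>
    match st.2 with
    | .inr h :: r' => pushCore fm2 .inr ((a :: st.1.flatMap t2) ++ h) r'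
    | r => pushCore fm2 .inr (a :: st.1.flatMap t2) r

def cnv (p : (Fin n₁ ⊕ Fin n₂) × Bool) : Ltr n₁ ⊕ Ltr n₂ :=
  match p.1 with
  | .inl i => .inl (i, p.2)
  | .inr j => .inr (j, p.2)

def F (w : List ((Fin n₁ ⊕ Fin n₂) × Bool)) : Bool :=
  let st := (w.map cnv).foldr (push fm1 fm2 t1 t2) ([], [])
  cond (decide (st.2 = [])) (f1 (st.1.flatMap t1)) false

theorem computable_F (hfm1 : Computable fm1) (hfm2 : Computable fm2)
    (hf1 : Computable f1) : Computable (F fm1 fm2 t1 t2 f1) := by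
  have htr1 : Computable fun k : List (Ltr m) => k.flatMap t1 :=
    (Primrec.list_flatMap (g := fun _ p => t1 p) Primrec.id ((Primrec.dom_finite t1).comp Primrec.snd)).to_comp
  have hpc1 : Computable₂ (fun (w : List (Ltr n₁)) (r : List (Blk n₁ n₂)) =>
      pushCore fm1 Sum.inl w r) := by
    show Computable fun p : List (Ltr n₁) × List (Blk n₁ n₂) => pushCore fm1 Sum.inl p.1 p.2
    have := Computable.option_casesOn (α := List (Ltr n₁) × List (Blk n₁ n₂))
      (o := fun p => fm1 p.1)
      (f := fun p => (([] : List (Ltr m)), Sum.inl p.1 :: p.2))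
      (g := fun p u => (u, p.2))
      (hfm1.comp Computable.fst)
      (Computable.pair (Computable.const [])
        (Computable.list_cons.comp (Computable.sumInl.comp Computable.fst) Computable.snd))
      (Computable.pair Computable.snd (Computable.snd.comp Computable.fst))
    refine this.of_eq fun p => ?_
    cases h : fm1 p.1 <;> simp [pushCore, h]
  have hpc2 : Computable₂ (fun (w : List (Ltr n₂)) (r : List (Blk n₁ n₂)) =>
      pushCore fm2 Sum.inr w r) := by
    show Computable fun p : List (Ltr n₂) × List (Blk n₁ n₂) => pushCore fm2 Sum.inr p.1 p.2
    have := Computable.option_casesOn (α := List (Ltr n₂) × List (Blk n₁ n₂))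
      (o := fun p => fm2 p.1)
      (f := fun p => (([] : List (Ltr m)), Sum.inr p.1 :: p.2))
      (g := fun p u => (u, p.2))
      (hfm2.comp Computable.fst)
      (Computable.pair (Computable.const [])
        (Computable.list_cons.comp (Computable.sumInr.comp Computable.fst) Computable.snd))
      (Computable.pair Computable.snd (Computable.snd.comp Computable.fst))
    refine this.of_eq fun p => ?_
    cases h : fm2 p.1 <;> simp [pushCore, h]
  have hx1 : Computable fun p : St n₁ n₂ m × Ltr n₁ => p.2 :: p.1.1.flatMap t1 :=
    Computable.list_cons.comp Computable.snd (htr1.comp (Computable.fst.comp Computable.fst))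
  have htr2 : Computable fun k : List (Ltr m) => k.flatMap t2 :=
    (Primrec.list_flatMap (g := fun _ p => t2 p) Primrec.id ((Primrec.dom_finite t2).comp Primrec.snd)).to_comp
  have hx2 : Computable fun p : St n₁ n₂ m × Ltr n₂ => p.2 :: p.1.1.flatMap t2 :=
    Computable.list_cons.comp Computable.snd (htr2.comp (Computable.fst.comp Computable.fst))
  have hside1 : Computable fun p : St n₁ n₂ m × Ltr n₁ =>
      push fm1 fm2 t1 t2 (Sum.inl p.2) p.1 := by
    have := Computable.option_casesOn (α := St n₁ n₂ m × Ltr n₁)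
      (o := fun p => p.1.2.head?)
      (f := fun p => pushCore fm1 Sum.inl (p.2 :: p.1.1.flatMap t1) p.1.2)
      (g := fun p b => Sum.casesOn b
        (fun h => pushCore fm1 Sum.inl ((p.2 :: p.1.1.flatMap t1) ++ h) p.1.2.tail)
        (fun _ => pushCore fm1 Sum.inl (p.2 :: p.1.1.flatMap t1) p.1.2))
      (Primrec.list_head?.to_comp.comp (Computable.snd.comp Computable.fst))
      (hpc1.comp hx1 (Computable.snd.comp Computable.fst))
      (Computable.sumCasesOn (α := (St n₁ n₂ m × Ltr n₁) × Blk n₁ n₂)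
        (f := fun q => q.2)
        (g := fun q h => pushCore fm1 Sum.inl ((q.1.2 :: q.1.1.1.flatMap t1) ++ h) q.1.1.2.tail)
        (h := fun q _ => pushCore fm1 Sum.inl (q.1.2 :: q.1.1.1.flatMap t1) q.1.1.2)
        Computable.snd
        (hpc1.comp
          (Computable.list_append.comp (hx1.comp (Computable.fst.comp Computable.fst))
            Computable.snd)
          (Primrec.list_tail.to_comp.comp
            (Computable.snd.comp (Computable.fst.comp (Computable.fst.comp Computable.fst)))))
        (hpc1.comp (hx1.comp (Computable.fst.comp Computable.fst))
          (Computable.snd.comp (Computable.fst.comp (Computable.fst.comp Computable.fst)))))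
    refine this.of_eq fun p => ?_
    rcases p with ⟨⟨k, r⟩, a⟩
    rcases r with _ | ⟨h | h, r'⟩ <;> rfl
  have hside2 : Computable fun p : St n₁ n₂ m × Ltr n₂ =>
      push fm1 fm2 t1 t2 (Sum.inr p.2) p.1 := by
    have := Computable.option_casesOn (α := St n₁ n₂ m × Ltr n₂)
      (o := fun p => p.1.2.head?)
      (f := fun p => pushCore fm2 Sum.inr (p.2 :: p.1.1.flatMap t2) p.1.2)
      (g := fun p b => Sum.casesOn b
        (fun _ => pushCore fm2 Sum.inr (p.2 :: p.1.1.flatMap t2) p.1.2)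
        (fun h => pushCore fm2 Sum.inr ((p.2 :: p.1.1.flatMap t2) ++ h) p.1.2.tail))
      (Primrec.list_head?.to_comp.comp (Computable.snd.comp Computable.fst))
      (hpc2.comp hx2 (Computable.snd.comp Computable.fst))
      (Computable.sumCasesOn (α := (St n₁ n₂ m × Ltr n₂) × Blk n₁ n₂)
        (f := fun q => q.2)
        (g := fun q _ => pushCore fm2 Sum.inr (q.1.2 :: q.1.1.1.flatMap t2) q.1.1.2)
        (h := fun q h => pushCore fm2 Sum.inr ((q.1.2 :: q.1.1.1.flatMap t2) ++ h) q.1.1.2.tail)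
        Computable.snd
        (hpc2.comp (hx2.comp (Computable.fst.comp Computable.fst))
          (Computable.snd.comp (Computable.fst.comp (Computable.fst.comp Computable.fst))))
        (hpc2.comp
          (Computable.list_append.comp (hx2.comp (Computable.fst.comp Computable.fst))
            Computable.snd)
          (Primrec.list_tail.to_comp.comp
            (Computable.snd.comp (Computable.fst.comp (Computable.fst.comp Computable.fst))))))
    refine this.of_eq fun p => ?_
    rcases p with ⟨⟨k, r⟩, a⟩
    rcases r with _ | ⟨h | h, r'⟩ <;> rfl
  have hpush : Computable₂ (push fm1 fm2 t1 t2 (m := m)) := by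
    show Computable fun p : (Ltr n₁ ⊕ Ltr n₂) × St n₁ n₂ m => push fm1 fm2 t1 t2 p.1 p.2
    have := Computable.sumCasesOn (α := (Ltr n₁ ⊕ Ltr n₂) × St n₁ n₂ m)
      (f := fun p => p.1)
      (g := fun p a => push fm1 fm2 t1 t2 (Sum.inl a) p.2)
      (h := fun p a => push fm1 fm2 t1 t2 (Sum.inr a) p.2)
      Computable.fst
      ((hside1.comp (Computable.pair (Computable.snd.comp Computable.fst)
        Computable.snd)).of_eq fun _ => rfl)
      ((hside2.comp (Computable.pair (Computable.snd.comp Computable.fst)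
        Computable.snd)).of_eq fun _ => rfl)
    refine this.of_eq fun p => ?_
    rcases p with ⟨x | x, st⟩ <;> rfl
  have hmap : Computable fun w : List ((Fin n₁ ⊕ Fin n₂) × Bool) => w.map cnv :=
    (Primrec.list_map (g := fun _ p => cnv p) Primrec.id ((Primrec.dom_finite cnv).comp Primrec.snd)).to_comp
  have hrun : Computable fun w : List ((Fin n₁ ⊕ Fin n₂) × Bool) =>
      (w.map cnv).foldr (push fm1 fm2 t1 t2) ([], []) := by
    have := computable_list_foldr (f := fun w : List ((Fin n₁ ⊕ Fin n₂) × Bool) => w.map cnv)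
      (g := fun _ => (([], []) : St n₁ n₂ m))
      (h := fun _ p => push fm1 fm2 t1 t2 p.1 p.2) hmap (Computable.const _)
      (hpush.comp (Computable.fst.comp Computable.snd) (Computable.snd.comp Computable.snd))
    exact this
  have hcond : Computable fun w : List ((Fin n₁ ⊕ Fin n₂) × Bool) =>
      decide (((w.map cnv).foldr (push fm1 fm2 t1 t2) ([], [])).2 = []) :=
    Primrec.eq.decide.to_comp.comp (Computable.snd.comp hrun) (Computable.const [])
  exact Computable.cond hcond
    (hf1.comp (htr1.comp (Computable.fst.comp hrun))) (Computable.const false)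

/-! ### Correctness -/

section Correctness

open PushoutI

variable {K : Type} [Group K] {H : Bool → Type} [∀ b, Group (H b)]
  (φ : ∀ b, K →* H b) (g₁ : Fin n₁ → H true) (g₂ : Fin n₂ → H false) (gT : Fin m → K)

/-- Evaluation of a block in the amalgam. -/
def evB : Blk n₁ n₂ → PushoutI φ :=
  Sum.elim (fun v => PushoutI.of (φ := φ) true (evalWord g₁ v))
    (fun v => PushoutI.of (φ := φ) false (evalWord g₂ v))

/-- Evaluation of a state in the amalgam. -/
def evS (st : St n₁ n₂ m) : PushoutI φ :=
  PushoutI.base φ (evalWord gT st.1) * (st.2.map (evB φ g₁ g₂)).prod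

/-- Evaluation of a single letter in the amalgam. -/
def evL : Ltr n₁ ⊕ Ltr n₂ → PushoutI φ :=
  Sum.elim (fun a => PushoutI.of (φ := φ) true (evalWord g₁ [a]))
    (fun a => PushoutI.of (φ := φ) false (evalWord g₂ [a]))

/-- The block does not represent an element of the amalgamated subgroup. -/
def NotBase (b : Blk n₁ n₂) : Prop :=
  Sum.elim (fun v => evalWord g₁ v ∉ (φ true).range)
    (fun v => evalWord g₂ v ∉ (φ false).range) b

def sideOf : Blk n₁ n₂ → Bool := Sum.elim (fun _ => true) (fun _ => false)

/-- The invariant maintained by the algorithm. -/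
def Good (r : List (Blk n₁ n₂)) : Prop :=
  r.Chain' (fun b b' => sideOf b ≠ sideOf b') ∧ ∀ b ∈ r, NotBase φ g₁ g₂ b

theorem evalWord_flatMap {G : Type} [Group G] (ψ : K →* G) {n : ℕ} (g : Fin n → G)
    (t : Ltr m → List (Ltr n)) (ht : ∀ p, evalWord g (t p) = ψ (evalWord gT [p]))
    (k : List (Ltr m)) : evalWord g (k.flatMap t) = ψ (evalWord gT k) := by
  induction k with
  | nil => simp [evalWord]
  | cons p k ih =>
    rw [List.flatMap_cons, evalWord_append, ih, ht, ← map_mul]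
    congr 1
    simp [evalWord_cons, evalWord]

section PushLemmas

variable (fm1 : List (Ltr n₁) → Option (List (Ltr m)))
  (fm2 : List (Ltr n₂) → Option (List (Ltr m)))
  (t1 : Ltr m → List (Ltr n₁)) (t2 : Ltr m → List (Ltr n₂))
  (hfm1 : ∀ w, (evalWord g₁ w ∈ (φ true).range ↔ (fm1 w).isSome) ∧
    ∀ u, fm1 w = some u → φ true (evalWord gT u) = evalWord g₁ w)
  (hfm2 : ∀ w, (evalWord g₂ w ∈ (φ false).range ↔ (fm2 w).isSome) ∧
    ∀ u, fm2 w = some u → φ false (evalWord gT u) = evalWord g₂ w)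
  (ht1 : ∀ p, evalWord g₁ (t1 p) = φ true (evalWord gT [p]))
  (ht2 : ∀ p, evalWord g₂ (t2 p) = φ false (evalWord gT [p]))

include hfm1 in
theorem pushCore1_evS (W : List (Ltr n₁)) (R : List (Blk n₁ n₂)) :
    evS φ g₁ g₂ gT (pushCore fm1 Sum.inl W R) =
      PushoutI.of (φ := φ) true (evalWord g₁ W) * (R.map (evB φ g₁ g₂)).prod := by
  rcases hu : fm1 W with _ | u
  · simp [pushCore, hu, evS, evB, evalWord, mul_assoc]
  · have heq := (hfm1 W).2 u hu
    simp [pushCore, hu, evS, ← heq, PushoutI.of_apply_eq_base]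

include hfm2 in
theorem pushCore2_evS (W : List (Ltr n₂)) (R : List (Blk n₁ n₂)) :
    evS φ g₁ g₂ gT (pushCore fm2 Sum.inr W R) =
      PushoutI.of (φ := φ) false (evalWord g₂ W) * (R.map (evB φ g₁ g₂)).prod := by
  rcases hu : fm2 W with _ | u
  · simp [pushCore, hu, evS, evB, evalWord, mul_assoc]
  · have heq := (hfm2 W).2 u hu
    simp [pushCore, hu, evS, ← heq, PushoutI.of_apply_eq_base]

include hfm1 hfm2 ht1 ht2 in
theorem push_evS (x : Ltr n₁ ⊕ Ltr n₂) (st : St n₁ n₂ m) :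
    evS φ g₁ g₂ gT (push fm1 fm2 t1 t2 x st) =
      evL φ g₁ g₂ x * evS φ g₁ g₂ gT st := by
  obtain ⟨k, r⟩ := st
  have h1 := evalWord_flatMap gT (φ true) g₁ t1 ht1 k
  have h2 := evalWord_flatMap gT (φ false) g₂ t2 ht2 k
  rcases x with a | a <;> rcases r with _ | ⟨h | h, r'⟩ <;>
    simp only [push] <;>
    (first
      | rw [pushCore1_evS φ g₁ g₂ gT fm1 hfm1]
      | rw [pushCore2_evS φ g₁ g₂ gT fm2 hfm2])
  all_goals
    simp only [evS, evL, evB, evalWord_cons, evalWord_append, evalWord_nil, h1, h2, map_mul,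
      PushoutI.of_apply_eq_base, mul_assoc, mul_one, List.map_cons, List.prod_cons,
      Sum.elim_inl, Sum.elim_inr, map_one, one_mul, List.map_nil, List.prod_nil]

include hfm1 hfm2 in
theorem push_good (x : Ltr n₁ ⊕ Ltr n₂) (st : St n₁ n₂ m)
    (h : Good φ g₁ g₂ st.2) :
    Good φ g₁ g₂ (push fm1 fm2 t1 t2 x st).2 := by
  obtain ⟨k, r⟩ := st
  obtain ⟨hchain, hnb⟩ := h
  have hnb1 : ∀ (W : List (Ltr n₁)), fm1 W = none → NotBase φ g₁ g₂ (Sum.inl W) := by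
    intro W hW
    simp only [NotBase, Sum.elim_inl]
    rw [(hfm1 W).1, hW]
    simp
  have hnb2 : ∀ (W : List (Ltr n₂)), fm2 W = none → NotBase φ g₁ g₂ (Sum.inr W) := by
    intro W hW
    simp only [NotBase, Sum.elim_inr]
    rw [(hfm2 W).1, hW]
    simp
  rcases x with a | a <;> rcases r with _ | ⟨h | h, r'⟩
  · rcases hu : fm1 (a :: k.flatMap t1) with _ | u <;>
      simp only [push, pushCore, hu]
    · exact ⟨List.isChain_singleton _, by
        simpa using hnb1 _ hu⟩
    · exact ⟨List.isChain_nil, by simp⟩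
  · rcases hu : fm1 ((a :: k.flatMap t1) ++ h) with _ | u <;>
      simp only [push, pushCore, hu]
    · unfold List.Chain' at hchain
      rw [List.isChain_cons] at hchain
      refine ⟨List.isChain_cons.2 ⟨hchain.1, hchain.2⟩, ?_⟩
      intro b hb
      rcases List.mem_cons.1 hb with hb | hb
      · subst hb; exact hnb1 _ hu
      · exact hnb b (List.mem_cons_of_mem _ hb)
    · exact ⟨hchain.tail, fun b hb => hnb b (List.mem_cons_of_mem _ hb)⟩
  · rcases hu : fm1 (a :: k.flatMap t1) with _ | u <;>
      simp only [push, pushCore, hu]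
    · refine ⟨List.isChain_cons_cons.2 ⟨by simp [sideOf], hchain⟩, ?_⟩
      intro b hb
      rcases List.mem_cons.1 hb with hb | hb
      · subst hb; exact hnb1 _ hu
      · exact hnb b hb
    · exact ⟨hchain, hnb⟩
  · rcases hu : fm2 (a :: k.flatMap t2) with _ | u <;>
      simp only [push, pushCore, hu]
    · exact ⟨List.isChain_singleton _, by simpa using hnb2 _ hu⟩
    · exact ⟨List.isChain_nil, by simp⟩
  · rcases hu : fm2 (a :: k.flatMap t2) with _ | u <;>
      simp only [push, pushCore, hu]
    · refine ⟨List.isChain_cons_cons.2 ⟨by simp [sideOf], hchain⟩, ?_⟩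
      intro b hb
      rcases List.mem_cons.1 hb with hb | hb
      · subst hb; exact hnb2 _ hu
      · exact hnb b hb
    · exact ⟨hchain, hnb⟩
  · rcases hu : fm2 ((a :: k.flatMap t2) ++ h) with _ | u <;>
      simp only [push, pushCore, hu]
    · unfold List.Chain' at hchain
      rw [List.isChain_cons] at hchain
      refine ⟨List.isChain_cons.2 ⟨hchain.1, hchain.2⟩, ?_⟩
      intro b hb
      rcases List.mem_cons.1 hb with hb | hb
      · subst hb; exact hnb2 _ hu
      · exact hnb b (List.mem_cons_of_mem _ hb)
    · exact ⟨hchain.tail, fun b hb => hnb b (List.mem_cons_of_mem _ hb)⟩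

end PushLemmas

theorem good_eq_nil_of_prod_mem_base (hinj : ∀ b, Function.Injective (φ b))
    {r : List (Blk n₁ n₂)} (hr : Good φ g₁ g₂ r)
    (hmem : (r.map (evB φ g₁ g₂)).prod ∈ (PushoutI.base φ).range) : r = [] := by
  classical
  let sig : Blk n₁ n₂ → Σ b, H b :=
    Sum.elim (fun v => ⟨true, evalWord g₁ v⟩) (fun v => ⟨false, evalWord g₂ v⟩)
  have hne : ∀ l ∈ r.map sig, Sigma.snd l ≠ 1 := by
    intro l hl
    obtain ⟨b, hb, rfl⟩ := List.mem_map.1 hl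
    have hNB := hr.2 b hb
    rcases b with v | v
    · exact fun h => hNB ⟨1, by rw [map_one]; exact h.symm⟩
    · exact fun h => hNB ⟨1, by rw [map_one]; exact h.symm⟩
  have hch : (r.map sig).Chain' fun l l' => Sigma.fst l ≠ Sigma.fst l' := by
    unfold List.Chain'
    rw [List.isChain_map]
    refine hr.1.imp ?_
    rintro (v | v) (v' | v') hvv' <;> simp_all [sideOf, sig]
  let w : Monoid.CoprodI.Word H := ⟨r.map sig, hne, hch⟩
  have hred : PushoutI.Reduced φ w := by
    intro g hg
    obtain ⟨b, hb, rfl⟩ := List.mem_map.1 hg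
    have hNB := hr.2 b hb
    rcases b with v | v <;> exact hNB
  have hprod : PushoutI.ofCoprodI (φ := φ) w.prod = (r.map (evB φ g₁ g₂)).prod := by
    show PushoutI.ofCoprodI (φ := φ) (((r.map sig).map fun l => Monoid.CoprodI.of l.2).prod) = _
    rw [map_list_prod, List.map_map, List.map_map]
    congr 1
    refine List.map_congr_left ?_
    rintro (v | v) _ <;> simp [sig, evB, PushoutI.ofCoprodI_of]
  have hempty := hred.eq_empty_of_mem_range hinj (by rw [hprod]; exact hmem)
  have : r.map sig = [] := congrArg Monoid.CoprodI.Word.toList hempty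
  exact List.map_eq_nil_iff.1 this

end Correctness

end AmalgamWP

/-- Corollary 3.4. Let `G = H₁ ∗_K H₂`, with `H₁, H₂, K` finitely
generated by `S₁, S₂, T`.  If each `H_j` has decidable word problem, and membership in
`K` of an element given by a word over `S_j` is decidable with a word over `T`
representing it computable, then `G` has decidable word problem (with respect to the
generating set `S₁ ⊔ S₂`). -/
theorem wordProblem_of_amalgam
    {K : Type} [Group K] {H : Bool → Type} [∀ b, Group (H b)]
    (φ : ∀ b, K →* H b) (hinj : ∀ b, Function.Injective (φ b))
    {n₁ n₂ m : ℕ} (g₁ : Fin n₁ → H true) (g₂ : Fin n₂ → H false) (gT : Fin m → K)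
    (hg₁ : Subgroup.closure (Set.range g₁) = ⊤)
    (hg₂ : Subgroup.closure (Set.range g₂) = ⊤)
    (hgT : Subgroup.closure (Set.range gT) = ⊤)
    (wp₁ : ∃ f : List (Fin n₁ × Bool) → Bool, Computable f ∧
      ∀ w, f w = true ↔ evalWord g₁ w = 1)
    (wp₂ : ∃ f : List (Fin n₂ × Bool) → Bool, Computable f ∧
      ∀ w, f w = true ↔ evalWord g₂ w = 1)
    (mem₁ : ∃ f : List (Fin n₁ × Bool) → Option (List (Fin m × Bool)),
      Computable f ∧ ∀ w,
        (evalWord g₁ w ∈ (φ true).range ↔ (f w).isSome) ∧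
        ∀ u, f w = some u → φ true (evalWord gT u) = evalWord g₁ w)
    (mem₂ : ∃ f : List (Fin n₂ × Bool) → Option (List (Fin m × Bool)),
      Computable f ∧ ∀ w,
        (evalWord g₂ w ∈ (φ false).range ↔ (f w).isSome) ∧
        ∀ u, f w = some u → φ false (evalWord gT u) = evalWord g₂ w) :
    ∃ F : List ((Fin n₁ ⊕ Fin n₂) × Bool) → Bool, Computable F ∧
      ∀ w, F w = true ↔
        evalWord (Sum.elim
          (fun i => PushoutI.of (φ := φ) true (g₁ i))
          (fun j => PushoutI.of (φ := φ) false (g₂ j))) w = 1 := by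
  classical
  obtain ⟨f1, hf1c, hf1⟩ := wp₁
  obtain ⟨fm1, hfm1c, hfm1⟩ := mem₁
  obtain ⟨fm2, hfm2c, hfm2⟩ := mem₂
  choose t1 ht1 using fun p : Fin m × Bool =>
    AmalgamWP.exists_evalWord_eq hg₁ (φ true (evalWord gT [p]))
  choose t2 ht2 using fun p : Fin m × Bool =>
    AmalgamWP.exists_evalWord_eq hg₂ (φ false (evalWord gT [p]))
  refine ⟨AmalgamWP.F fm1 fm2 t1 t2 f1,
    AmalgamWP.computable_F fm1 fm2 t1 t2 f1 hfm1c hfm2c hf1c, ?_⟩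
  intro w
  have hrun : ∀ v : List ((Fin n₁ ⊕ Fin n₂) × Bool),
      evalWord (Sum.elim (fun i => PushoutI.of (φ := φ) true (g₁ i))
        (fun j => PushoutI.of (φ := φ) false (g₂ j))) v =
      AmalgamWP.evS φ g₁ g₂ gT
        ((v.map AmalgamWP.cnv).foldr (AmalgamWP.push fm1 fm2 t1 t2) ([], [])) := by
    intro v
    induction v with
    | nil => simp [AmalgamWP.evS, evalWord]
    | cons p ws ih =>
      rw [List.map_cons, List.foldr_cons,
        AmalgamWP.push_evS φ g₁ g₂ gT fm1 fm2 t1 t2 hfm1 hfm2 ht1 ht2, ← ih,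
        AmalgamWP.evalWord_cons]
      congr 1
      rcases p with ⟨i | j, b⟩ <;> cases b <;>
        simp [AmalgamWP.cnv, AmalgamWP.evL, AmalgamWP.evalWord_cons, AmalgamWP.evalWord_nil,
          map_inv, mul_one]
  have hgood : AmalgamWP.Good φ g₁ g₂
      ((w.map AmalgamWP.cnv).foldr (AmalgamWP.push fm1 fm2 t1 t2) ([], [])).2 := by
    induction w with
    | nil => exact ⟨List.isChain_nil, by simp⟩
    | cons p ws ih =>
      rw [List.map_cons, List.foldr_cons]
      exact AmalgamWP.push_good φ g₁ g₂ gT fm1 fm2 t1 t2 hfm1 hfm2 _ _ ih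
  set st := (w.map AmalgamWP.cnv).foldr (AmalgamWP.push fm1 fm2 t1 t2) ([], []) with hstdef
  rw [hrun w]
  have hiff : AmalgamWP.evS φ g₁ g₂ gT st = 1 ↔ st.2 = [] ∧ evalWord gT st.1 = 1 := by
    constructor
    · intro h1
      have h1' : PushoutI.base φ (evalWord gT st.1) *
          (st.2.map (AmalgamWP.evB φ g₁ g₂)).prod = 1 := h1
      have hm : (st.2.map (AmalgamWP.evB φ g₁ g₂)).prod ∈ (PushoutI.base φ).range := by
        refine ⟨(evalWord gT st.1)⁻¹, ?_⟩
        rw [map_inv]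
        exact inv_eq_of_mul_eq_one_right h1'
      have hnil := AmalgamWP.good_eq_nil_of_prod_mem_base φ g₁ g₂ hinj hgood hm
      refine ⟨hnil, ?_⟩
      rw [hnil] at h1'
      simp only [List.map_nil, List.prod_nil, mul_one] at h1'
      exact PushoutI.base_injective hinj (by rw [map_one]; exact h1')
    · rintro ⟨h2, h3⟩
      show PushoutI.base φ (evalWord gT st.1) * (st.2.map (AmalgamWP.evB φ g₁ g₂)).prod = 1
      rw [h2, h3]
      simp
  rw [hiff]
  have hF : AmalgamWP.F fm1 fm2 t1 t2 f1 w = true ↔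
      st.2 = [] ∧ f1 (st.1.flatMap t1) = true := by
    by_cases hnil : st.2 = [] <;> simp [AmalgamWP.F, ← hstdef, hnil]
  rw [hF]
  have hk : f1 (st.1.flatMap t1) = true ↔ evalWord gT st.1 = 1 := by
    rw [hf1, AmalgamWP.evalWord_flatMap gT (φ true) g₁ t1 ht1]
    constructor
    · intro h
      exact hinj true (by rw [h, map_one])
    · intro h
      rw [h, map_one]
  rw [hk]
end

section
/- Let Γ be a Coxeter graph with vertex set S, and let s, t ∈ S with s ≠ t and m_{s,t} = ∞. Set X = S \ {s}, Y = S \ {t}, Z = S \ {s,t}. Then the Artin-Tits group A_Γ is isomorphic to the amalgamated free product A_X ∗_{A_Z} A_Y of the Artin-Tits groups of the full subgraphs Γ_X and Γ_Y over the Artin-Tits group of Γ_Z. -/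
open Monoid

/-- The alternating word `s t s t ⋯` of length `m`, as an element of the free group. -/
def altWord {S : Type} (s t : S) : ℕ → FreeGroup S
  | 0 => 1
  | n + 1 => FreeGroup.of s * altWord t s n

/-- The braid relations `Π(σ_s,σ_t : m_{s,t}) = Π(σ_t,σ_s : m_{s,t})` (for `s ≠ t` and
`m_{s,t} ≠ ∞`, infinity being encoded by the entry `0`) of an Artin-Tits group. -/
def artinRels {S : Type} (M : CoxeterMatrix S) : Set (FreeGroup S) :=
  {r | ∃ s t : S, s ≠ t ∧ M s t ≠ 0 ∧
    r = altWord s t (M s t) * (altWord t s (M s t))⁻¹}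

/-- The Artin-Tits group of a Coxeter matrix (`0` entries encoding `∞`). -/
abbrev ArtinTits {S : Type} (M : CoxeterMatrix S) : Type := PresentedGroup (artinRels M)

/-- The restriction of a Coxeter matrix to a subset `X` of its index set. -/
def CoxeterMatrix.restrict {S : Type} (M : CoxeterMatrix S) (X : Set S) :
    CoxeterMatrix X where
  M := fun a b => M a b
  isSymm := by
    unfold Matrix.IsSymm
    ext a b
    exact M.symmetric b a
  diagonal a := M.diagonal a
  off_diagonal a b h := M.off_diagonal a b (fun hc => h (Subtype.ext hc))

/-- An auxiliary two-element family of groups, used to form the amalgamated free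
product `A ∗_K B` as a pushout `PushoutI` over the index type `Bool`. -/
def GPair (A B : Type) : Bool → Type
  | true => A
  | false => B

instance instGPairGroup {A B : Type} [Group A] [Group B] : (b : Bool) → Group (GPair A B b)
  | true => inferInstanceAs (Group A)
  | false => inferInstanceAs (Group B)

/-- The pair of homomorphisms `K →* A`, `K →* B`, as a `Bool`-indexed family. -/
def GPairHom {K A B : Type} [Group K] [Group A] [Group B]
    (f : K →* A) (g : K →* B) : (b : Bool) → (K →* GPair A B b)
  | true => f
  | false => g

lemma mem_complSingleton_left {S : Type} {s t : S} (z : ({s, t}ᶜ : Set S)) :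
    (z : S) ∈ ({s}ᶜ : Set S) := by
  have h2 := z.2
  simp only [Set.mem_compl_iff, Set.mem_insert_iff, Set.mem_singleton_iff] at *
  tauto

lemma mem_complSingleton_right {S : Type} {s t : S} (z : ({s, t}ᶜ : Set S)) :
    (z : S) ∈ ({t}ᶜ : Set S) := by
  have h2 := z.2
  simp only [Set.mem_compl_iff, Set.mem_insert_iff, Set.mem_singleton_iff] at *
  tauto

/-! ### Auxiliary lemmas -/

/-- A pair of cohomomorphisms `A →* K`, `B →* K`, as a `Bool`-indexed family. -/
def GPairCoHom {K A B : Type} [Group K] [Group A] [Group B]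
    (f : A →* K) (g : B →* K) : (b : Bool) → (GPair A B b →* K)
  | true => f
  | false => g

lemma altWord_map {S T : Type} (f : S → T) (s t : S) (n : ℕ) :
    FreeGroup.map f (altWord s t n) = altWord (f s) (f t) n := by
  induction n generalizing s t with
  | zero => simp [altWord]
  | succ n ih => simp [altWord, ih]

lemma presentedGroup_mk_rel_one {α : Type} (rels : Set (FreeGroup α)) {r : FreeGroup α}
    (h : r ∈ rels) : (QuotientGroup.mk r : PresentedGroup rels) = 1 := by
  rw [QuotientGroup.eq_one_iff]
  exact Subgroup.subset_normalClosure h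

lemma lift_restrict_eq {S G : Type} [Group G] (f : S → G) (X : Set S)
    (H : FreeGroup X →* G) (hf : ∀ x : X, f ↑x = H (FreeGroup.of x))
    (w : FreeGroup X) : FreeGroup.lift f (FreeGroup.map Subtype.val w) = H w := by
  have : (FreeGroup.lift f).comp (FreeGroup.map Subtype.val) = H := by
    ext x
    simp [hf x]
  calc FreeGroup.lift f (FreeGroup.map Subtype.val w)
      = ((FreeGroup.lift f).comp (FreeGroup.map Subtype.val)) w := rfl
    _ = H w := by rw [this]

lemma artin_lift_rel_one {S G : Type} [Group G] (M : CoxeterMatrix S) (f : S → G)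
    (X : Set S) (H : ArtinTits (M.restrict X) →* G)
    (hf : ∀ x : X, f ↑x = H (PresentedGroup.of x))
    {a b : S} (ha : a ∈ X) (hb : b ∈ X) (hab : a ≠ b) (hM : M a b ≠ 0) :
    FreeGroup.lift f (altWord a b (M a b) * (altWord b a (M a b))⁻¹) = 1 := by
  set m := M a b with hm
  set a' : X := ⟨a, ha⟩
  set b' : X := ⟨b, hb⟩
  have hr : altWord a' b' m * (altWord b' a' m)⁻¹ ∈ artinRels (M.restrict X) :=
    ⟨a', b', fun h => hab (congrArg Subtype.val h), hM, rfl⟩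
  have hkey := lift_restrict_eq f X
    (H.comp (QuotientGroup.mk' (Subgroup.normalClosure (artinRels (M.restrict X)))))
    (fun x => hf x) (altWord a' b' m * (altWord b' a' m)⁻¹)
  rw [map_mul, map_inv, altWord_map, altWord_map] at hkey
  have : H ((QuotientGroup.mk (altWord a' b' m * (altWord b' a' m)⁻¹) :
      ArtinTits (M.restrict X))) = 1 := by
    rw [presentedGroup_mk_rel_one _ hr]; exact map_one H
  exact hkey.trans this

/-- The natural homomorphism `A_{Γ_X} →* A_Γ` sending generators to generators. -/
def artinNatHom {S : Type} (M : CoxeterMatrix S) (X : Set S) :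
    ArtinTits (M.restrict X) →* ArtinTits M :=
  PresentedGroup.toGroup (f := fun x : X => (PresentedGroup.of (x : S) : ArtinTits M)) (by
    rintro r ⟨a, b, hab, hM, rfl⟩
    have heq : (FreeGroup.lift (fun x : X => (PresentedGroup.of (x : S) : ArtinTits M)))
        = (QuotientGroup.mk' (Subgroup.normalClosure (artinRels M))).comp
            (FreeGroup.map Subtype.val) := by
      ext x
      rfl
    have hr : altWord (a : S) (b : S) (M (a : S) (b : S)) *
        (altWord (b : S) (a : S) (M (a : S) (b : S)))⁻¹ ∈ artinRels M :=
      ⟨a, b, Subtype.coe_injective.ne hab, hM, rfl⟩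
    have hmap : FreeGroup.map Subtype.val
        (altWord a b (M.restrict X a b) * (altWord b a (M.restrict X a b))⁻¹)
        = altWord (a : S) (b : S) (M (a : S) (b : S)) *
            (altWord (b : S) (a : S) (M (a : S) (b : S)))⁻¹ := by
      rw [map_mul, map_inv, altWord_map, altWord_map]
      rfl
    rw [heq]
    exact (congrArg (QuotientGroup.mk' (Subgroup.normalClosure (artinRels M))) hmap).trans
      (presentedGroup_mk_rel_one _ hr))

@[simp] lemma artinNatHom_of {S : Type} (M : CoxeterMatrix S) (X : Set S) (x : X) :
    artinNatHom M X (PresentedGroup.of x) = PresentedGroup.of (x : S) :=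
  PresentedGroup.toGroup.of _

/-- If `m_{s,t} = ∞`, then, with `X = S ∖ {s}`, `Y = S ∖ {t}` and
`Z = S ∖ {s,t}`, the Artin-Tits group `A_Γ` is isomorphic to the amalgamated free
product `A_X ∗_{A_Z} A_Y` over the natural maps `A_Z → A_X`, `A_Z → A_Y` (which send
generators to generators), compatibly with the generators. -/
theorem artinTits_amalgam {S : Type} [Fintype S] (M : CoxeterMatrix S)
    (s t : S) (hst : s ≠ t) (hinf : M s t = 0)
    (φX : ArtinTits (M.restrict ({s, t}ᶜ)) →* ArtinTits (M.restrict ({s}ᶜ)))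
    (φY : ArtinTits (M.restrict ({s, t}ᶜ)) →* ArtinTits (M.restrict ({t}ᶜ)))
    (hφX : ∀ z : ({s, t}ᶜ : Set S),
      φX (PresentedGroup.of z) = PresentedGroup.of ⟨z, mem_complSingleton_left z⟩)
    (hφY : ∀ z : ({s, t}ᶜ : Set S),
      φY (PresentedGroup.of z) = PresentedGroup.of ⟨z, mem_complSingleton_right z⟩) :
    ∃ e : ArtinTits M ≃* PushoutI (GPairHom φX φY),
      (∀ x : ({s}ᶜ : Set S),
          e (PresentedGroup.of (x : S))
            = PushoutI.of (φ := GPairHom φX φY) true (PresentedGroup.of x))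
      ∧ (∀ y : ({t}ᶜ : Set S),
          e (PresentedGroup.of (y : S))
            = PushoutI.of (φ := GPairHom φX φY) false (PresentedGroup.of y)) := by
  classical
  have hs_memY : s ∈ ({t}ᶜ : Set S) := by simp [hst]
  set P := PushoutI (GPairHom φX φY) with hP
  let oT : ArtinTits (M.restrict ({s}ᶜ)) →* P :=
    PushoutI.of (φ := GPairHom φX φY) true
  let oF : ArtinTits (M.restrict ({t}ᶜ)) →* P :=
    PushoutI.of (φ := GPairHom φX φY) false
  let F : S → P := fun u =>
    if h : u = s then oF (PresentedGroup.of ⟨s, hs_memY⟩)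
    else oT (PresentedGroup.of ⟨u, h⟩)
  have FX : ∀ x : ({s}ᶜ : Set S), F ↑x = oT (PresentedGroup.of x) := by
    intro x
    have hx : (x : S) ≠ s := x.2
    exact dif_neg hx
  have FY : ∀ x : ({t}ᶜ : Set S), F ↑x = oF (PresentedGroup.of x) := by
    intro x
    by_cases h : (x : S) = s
    · have hx : x = ⟨s, hs_memY⟩ := Subtype.ext h
      rw [hx]
      exact dif_pos rfl
    · have hxt : (x : S) ≠ t := x.2
      have hz : (x : S) ∈ ({s, t}ᶜ : Set S) := by simp [h, hxt]
      set z : ({s, t}ᶜ : Set S) := ⟨x, hz⟩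
      have h1 : F ↑x = oT (PresentedGroup.of ⟨(z : S), mem_complSingleton_left z⟩) :=
        dif_neg h
      rw [h1, ← hφX z]
      have h2 : oF (PresentedGroup.of x)
          = oF (PresentedGroup.of ⟨(z : S), mem_complSingleton_right z⟩) := rfl
      rw [h2, ← hφY z]
      exact PushoutI.of_apply_eq_base (GPairHom φX φY) true (PresentedGroup.of z) |>.trans
        (PushoutI.of_apply_eq_base (GPairHom φX φY) false (PresentedGroup.of z)).symm
  -- the forward homomorphism
  have hrels : ∀ r ∈ artinRels M, FreeGroup.lift F r = 1 := by
    rintro r ⟨a, b, hab, hM, rfl⟩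
    by_cases hcase : a ≠ s ∧ b ≠ s
    · exact artin_lift_rel_one M F ({s}ᶜ) oT FX hcase.1 hcase.2 hab hM
    · have hbs : a = s ∨ b = s := by tauto
      have hat : a ≠ t ∧ b ≠ t := by
        rcases hbs with h | h
        · subst h
          refine ⟨hst, fun hb => hM ?_⟩
          rw [hb]; exact hinf
        · subst h
          refine ⟨fun ha => hM ?_, hst⟩
          rw [ha]
          rw [M.symmetric]; exact hinf
      exact artin_lift_rel_one M F ({t}ᶜ) oF FY hat.1 hat.2 hab hM
  let toHom : ArtinTits M →* P := PresentedGroup.toGroup hrels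
  have toHom_of : ∀ u : S, toHom (PresentedGroup.of u) = F u := fun u =>
    PresentedGroup.toGroup.of hrels
  -- the inverse homomorphism
  let kX := artinNatHom M ({s}ᶜ)
  let kY := artinNatHom M ({t}ᶜ)
  let kZ := artinNatHom M ({s, t}ᶜ)
  have hcompX : kX.comp φX = kZ := by
    apply PresentedGroup.ext
    intro z
    rw [MonoidHom.comp_apply, hφX]
    simp [kX, kZ]
  have hcompY : kY.comp φY = kZ := by
    apply PresentedGroup.ext
    intro z
    rw [MonoidHom.comp_apply, hφY]
    simp [kY, kZ]
  let invHom : P →* ArtinTits M :=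
    PushoutI.lift (GPairCoHom kX kY) kZ (by
      intro i
      cases i
      · exact hcompY
      · exact hcompX)
  have inv_toHom : invHom.comp toHom = MonoidHom.id _ := by
    apply PresentedGroup.ext
    intro u
    rw [MonoidHom.comp_apply, toHom_of, MonoidHom.id_apply]
    by_cases h : u = s
    · have hF : F u = oF (PresentedGroup.of ⟨s, hs_memY⟩) := dif_pos h
      rw [hF]
      show invHom (PushoutI.of (φ := GPairHom φX φY) false (PresentedGroup.of ⟨s, hs_memY⟩)) = _
      refine Eq.trans (PushoutI.lift_of ..) ?_
      rw [h]
      exact artinNatHom_of M ({t}ᶜ) ⟨s, hs_memY⟩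
    · have : F u = oT (PresentedGroup.of ⟨u, h⟩) := dif_neg h
      rw [this]
      show invHom (PushoutI.of (φ := GPairHom φX φY) true (PresentedGroup.of ⟨u, h⟩)) = _
      refine Eq.trans (PushoutI.lift_of ..) ?_
      exact artinNatHom_of M ({s}ᶜ) ⟨u, h⟩
  have toHom_inv : toHom.comp invHom = MonoidHom.id _ := by
    apply PushoutI.hom_ext_nonempty
    intro i
    cases i
    · apply PresentedGroup.ext
      intro x
      show toHom (invHom (oF (PresentedGroup.of x))) = oF (PresentedGroup.of x)
      have : invHom (oF (PresentedGroup.of x)) = kY (PresentedGroup.of x) :=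
        PushoutI.lift_of _ _ _ _
      rw [this, artinNatHom_of, toHom_of]
      exact FY x
    · apply PresentedGroup.ext
      intro x
      show toHom (invHom (oT (PresentedGroup.of x))) = oT (PresentedGroup.of x)
      have : invHom (oT (PresentedGroup.of x)) = kX (PresentedGroup.of x) :=
        PushoutI.lift_of _ _ _ _
      rw [this, artinNatHom_of, toHom_of]
      exact FX x
  refine ⟨MonoidHom.toMulEquiv toHom invHom inv_toHom toHom_inv, ?_, ?_⟩
  · intro x
    show toHom (PresentedGroup.of (x : S)) = _
    rw [toHom_of]
    exact FX x
  · intro y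
    show toHom (PresentedGroup.of (y : S)) = _
    rw [toHom_of]
    exact FY y
end

section
/- Let Γ be a connected Coxeter graph of spherical type with vertex set S = {s₁,…,s_n}, and let X ⊊ S be a proper subset. Then Z(A_Γ) ∩ A_X = {1}, where Z(A_Γ) is the infinite cyclic group generated by δ = (σ₁⋯σ_n)^h with h the Coxeter number of (W_Γ, S). -/
/-- The Coxeter graph of a Coxeter matrix: vertices are the elements of `S`, and two
distinct vertices `u, v` are adjacent iff `m_{u,v} ≥ 3` (including `m_{u,v} = ∞`,
encoded by `0`), i.e. iff `M u v ≠ 2`. -/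
def coxGraph {S : Type} (M : CoxeterMatrix S) : SimpleGraph S where
  Adj u v := u ≠ v ∧ M u v ≠ 2
  symm := ⟨by
    rintro u v ⟨h1, h2⟩
    exact ⟨h1.symm, by rwa [M.symmetric v u]⟩⟩
  loopless := ⟨fun u hu => hu.1 rfl⟩


namespace ATProof

open Finsupp

variable {W : Type} [Group W]

/-- Conjugation pushforward on finitely-supported functions on a group. -/
noncomputable def conjMap {A : Type} [AddCommGroup A] (w : W) (v : W →₀ A) : W →₀ A :=
  Finsupp.mapDomain (fun u => w * u * w⁻¹) v

theorem conjMap_add {A : Type} [AddCommGroup A] (w : W) (v v' : W →₀ A) :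
    conjMap w (v + v') = conjMap w v + conjMap w v' := Finsupp.mapDomain_add

theorem conjMap_zero {A : Type} [AddCommGroup A] (w : W) :
    conjMap w (0 : W →₀ A) = 0 := Finsupp.mapDomain_zero

theorem conjMap_neg {A : Type} [AddCommGroup A] (w : W) (v : W →₀ A) :
    conjMap w (-v) = -(conjMap w v) :=
  (Finsupp.mapDomain.addMonoidHom (fun u => w * u * w⁻¹)).map_neg v

theorem conjMap_one {A : Type} [AddCommGroup A] (v : W →₀ A) :
    conjMap (1 : W) v = v := by
  rw [conjMap, show (fun u => (1:W) * u * (1:W)⁻¹) = id by funext u; simp,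
    Finsupp.mapDomain_id]

theorem conjMap_conjMap {A : Type} [AddCommGroup A] (w w' : W) (v : W →₀ A) :
    conjMap w (conjMap w' v) = conjMap (w * w') v := by
  rw [conjMap, conjMap, conjMap, ← Finsupp.mapDomain_comp]
  congr 1
  funext u
  simp [mul_assoc]

theorem conjMap_single {A : Type} [AddCommGroup A] (w t : W) (a : A) :
    conjMap w (Finsupp.single t a) = Finsupp.single (w * t * w⁻¹) a :=
  Finsupp.mapDomain_single

theorem conjMap_apply {A : Type} [AddCommGroup A] (w : W) (v : W →₀ A) (q : W) :
    conjMap w v q = v (w⁻¹ * q * w) := by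
  have hinj : Function.Injective (fun u => w * u * w⁻¹) := by
    intro x y hxy
    simpa using hxy
  have hq : w * (w⁻¹ * q * w) * w⁻¹ = q := by group
  simpa [conjMap, hq] using Finsupp.mapDomain_apply hinj v (w⁻¹ * q * w)

theorem conjMap_smul (w : W) (v : W →₀ ℤ) (k : ℤ) :
    conjMap w (k • v) = k • conjMap w v :=
  (Finsupp.mapDomain.addMonoidHom (fun u => w * u * w⁻¹)).map_zsmul k v

/-- The semidirect product `W ⋉ ℤ[W]` with `W` acting by conjugation on the basis. -/
@[ext]
structure GG (W : Type) [Group W] where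
  w : W
  v : W →₀ ℤ

noncomputable instance : One (GG W) := ⟨⟨1, 0⟩⟩
noncomputable instance : Mul (GG W) := ⟨fun x y => ⟨x.w * y.w, x.v + conjMap x.w y.v⟩⟩
noncomputable instance : Inv (GG W) := ⟨fun x => ⟨x.w⁻¹, -(conjMap x.w⁻¹ x.v)⟩⟩

theorem GG.mul_def (x y : GG W) : x * y = ⟨x.w * y.w, x.v + conjMap x.w y.v⟩ := rfl
theorem GG.one_def : (1 : GG W) = ⟨1, 0⟩ := rfl
theorem GG.inv_def (x : GG W) : x⁻¹ = ⟨x.w⁻¹, -(conjMap x.w⁻¹ x.v)⟩ := rfl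

@[simp] theorem GG.mul_w (x y : GG W) : (x * y).w = x.w * y.w := rfl
@[simp] theorem GG.mul_v (x y : GG W) : (x * y).v = x.v + conjMap x.w y.v := rfl
@[simp] theorem GG.one_w : (1 : GG W).w = 1 := rfl
@[simp] theorem GG.one_v : (1 : GG W).v = 0 := rfl

noncomputable instance : Group (GG W) where
  mul_assoc x y z := by
    ext1
    · simp [mul_assoc]
    · simp [conjMap_add, conjMap_conjMap, add_assoc]
  one_mul x := by ext1 <;> simp [conjMap_one]
  mul_one x := by ext1 <;> simp [conjMap_zero]
  inv_mul_cancel x := by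
    ext1
    · simp [GG.inv_def]
    · simp [GG.inv_def, conjMap_add, conjMap_neg, conjMap_conjMap]

theorem GG.pow_def (x : GG W) (n : ℕ) :
    x ^ n = ⟨x.w ^ n, ∑ i ∈ Finset.range n, conjMap (x.w ^ i) x.v⟩ := by
  induction n with
  | zero => simp [GG.one_def]
  | succ n ih =>
    rw [pow_succ, ih, GG.mul_def, Finset.sum_range_succ, pow_succ]

theorem GG.one_zpow (v : W →₀ ℤ) (k : ℤ) :
    (⟨1, v⟩ : GG W) ^ k = ⟨1, k • v⟩ := by
  have hnat : ∀ n : ℕ, (⟨1, v⟩ : GG W) ^ n = ⟨1, (n : ℤ) • v⟩ := by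
    intro n
    rw [GG.pow_def]
    ext1
    · simp
    · show (∑ i ∈ Finset.range n, conjMap ((1:W) ^ i) v) = (n : ℤ) • v
      have : ∀ i ∈ Finset.range n, conjMap ((1:W) ^ i) v = v := by
        intro i _; rw [one_pow, conjMap_one]
      rw [Finset.sum_congr rfl this, Finset.sum_const, Finset.card_range]
      simp
  rcases k with n | n
  · simpa using hnat n
  · rw [Int.negSucc_eq, zpow_neg, ← Nat.cast_one, ← Nat.cast_add, zpow_natCast, hnat,
      GG.inv_def]
    ext1
    · simp
    · show -(conjMap ((1:W)⁻¹) (((n:ℤ)+1) • v)) = Int.negSucc n • v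
      rw [inv_one, conjMap_one, negSucc_zsmul]
      norm_cast



section Alt

variable {W : Type} [Group W]

/-- Alternating product `a * b * a * ⋯` of length `m`. -/
def altProd (a b : W) : ℕ → W
  | 0 => 1
  | n + 1 => a * altProd b a n

@[simp] theorem altProd_zero (a b : W) : altProd a b 0 = 1 := rfl
theorem altProd_succ (a b : W) (n : ℕ) : altProd a b (n + 1) = a * altProd b a n := rfl

theorem altProd_two_step (a b : W) (n : ℕ) :
    altProd a b (n + 2) = (a * b) * altProd a b n := by
  rw [altProd_succ, altProd_succ, mul_assoc]

theorem altProd_even (a b : W) (k : ℕ) : altProd a b (2 * k) = (a * b) ^ k := by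
  induction k with
  | zero => simp
  | succ k ih =>
    have : 2 * (k + 1) = 2 * k + 2 := by ring
    rw [this, altProd_two_step, ih, pow_succ']

theorem altProd_odd (a b : W) (k : ℕ) : altProd a b (2 * k + 1) = (a * b) ^ k * a := by
  induction k with
  | zero => simp [altProd_succ]
  | succ k ih =>
    have : 2 * (k + 1) + 1 = (2 * k + 1) + 2 := by ring
    rw [this, altProd_two_step, ih, pow_succ']
    simp [mul_assoc]

theorem ba_eq_inv {a b : W} (ha : a * a = 1) (hb : b * b = 1) : b * a = (a * b)⁻¹ := by
  apply eq_inv_of_mul_eq_one_right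
  rw [mul_assoc, ← mul_assoc b b a, hb, one_mul, ha]

theorem altProd_braid {a b : W} (ha : a * a = 1) (hb : b * b = 1) {m : ℕ}
    (hm : (a * b) ^ m = 1) : altProd a b m = altProd b a m := by
  have hba : b * a = (a * b)⁻¹ := ba_eq_inv ha hb
  rcases Nat.even_or_odd m with ⟨k, hk⟩ | ⟨k, hk⟩
  · have hk2 : m = 2 * k := by omega
    subst hk2
    rw [altProd_even, altProd_even, hba, inv_pow]
    have h1 : (a * b) ^ k * (a * b) ^ k = 1 := by
      rw [← pow_add]
      convert hm using 2
      omega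
    exact eq_inv_of_mul_eq_one_left h1
  · subst hk
    rw [altProd_odd, altProd_odd, hba, inv_pow]
    have h2k : (a * b) ^ (2 * k) = b * a := by
      have h1 : (a * b) ^ (2 * k) * (a * b) = 1 := by rw [← pow_succ]; exact hm
      rw [eq_inv_of_mul_eq_one_left h1, ← hba]
    have key : (a * b) ^ k * ((a * b) ^ k * a) = b := by
      rw [← mul_assoc, ← pow_add]
      have h2 : k + k = 2 * k := by ring
      rw [h2, h2k, mul_assoc, ha, mul_one]
    rw [eq_comm, inv_mul_eq_iff_eq_mul]
    exact key.symm

theorem sum_single_braid {a b : W} (ha : a * a = 1) (hb : b * b = 1) {m : ℕ}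
    (hm : (a * b) ^ m = 1) :
    ∑ j ∈ Finset.range m, Finsupp.single ((a * b) ^ j * a) (1 : ℤ)
      = ∑ j ∈ Finset.range m, Finsupp.single ((b * a) ^ j * b) (1 : ℤ) := by
  have hba : b * a = (a * b)⁻¹ := ba_eq_inv ha hb
  rw [← Finset.sum_range_reflect (fun j => Finsupp.single ((a * b) ^ j * a) (1 : ℤ)) m]
  apply Finset.sum_congr rfl
  intro j hj
  have hj' : j < m := Finset.mem_range.mp hj
  congr 1
  have hpow : (a * b) ^ (m - 1 - j) = ((a * b) ^ (j + 1))⁻¹ := by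
    apply eq_inv_of_mul_eq_one_left
    rw [← pow_add]
    have hsum : (m - 1 - j) + (j + 1) = m := by omega
    rw [hsum, hm]
  rw [hpow, ← inv_pow, ← hba, pow_succ, mul_assoc, mul_assoc, ha, mul_one]

end Alt


section ArtinHom

open Finsupp

theorem conjMap_finset_sum {W : Type} [Group W] {A : Type} [AddCommGroup A] {ι : Type}
    (w : W) (s : Finset ι) (g : ι → (W →₀ A)) :
    conjMap w (∑ i ∈ s, g i) = ∑ i ∈ s, conjMap w (g i) :=
  map_sum (Finsupp.mapDomain.addMonoidHom _) g s

noncomputable def ggen {W : Type} [Group W] (w : W) : GG W := ⟨w, Finsupp.single w 1⟩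

variable {S : Type} (M : CoxeterMatrix S)

noncomputable def fgen : S → GG M.Group := fun i => ggen (M.simple i)

theorem msimple_sq (i : S) : M.simple i * M.simple i = 1 := by
  have := M.toCoxeterSystem.simple_mul_simple_self i
  rwa [CoxeterMatrix.toCoxeterSystem_simple] at this

theorem msimple_braid (i j : S) : (M.simple i * M.simple j) ^ (M i j) = 1 := by
  have := M.toCoxeterSystem.simple_mul_simple_pow i j
  rwa [CoxeterMatrix.toCoxeterSystem_simple] at this

theorem lift_altWord (m : ℕ) (s t : S) :
    FreeGroup.lift (fgen M) (altWord s t m)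
      = ⟨altProd (M.simple s) (M.simple t) m,
         ∑ j ∈ Finset.range m,
           Finsupp.single ((M.simple s * M.simple t) ^ j * M.simple s) (1 : ℤ)⟩ := by
  induction m generalizing s t with
  | zero =>
    show FreeGroup.lift (fgen M) 1 = _
    rw [map_one]
    rw [GG.one_def]
    congr 1
  | succ m ih =>
    set a := M.simple s
    set b := M.simple t
    have haa : a⁻¹ = a := inv_eq_of_mul_eq_one_right (msimple_sq M s)
    show FreeGroup.lift (fgen M) (FreeGroup.of s * altWord t s m) = _
    rw [map_mul, ih t s, FreeGroup.lift_apply_of]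
    show (⟨a, Finsupp.single a 1⟩ : GG M.Group) * _ = _
    rw [GG.mul_def]
    congr 1
    show Finsupp.single a (1:ℤ) + conjMap a (∑ j ∈ Finset.range m,
        Finsupp.single ((b * a) ^ j * b) (1:ℤ))
      = ∑ j ∈ Finset.range (m + 1), Finsupp.single ((a * b) ^ j * a) (1:ℤ)
    rw [conjMap_finset_sum]
    have hterm : ∀ j, conjMap a (Finsupp.single ((b * a) ^ j * b) (1:ℤ))
        = Finsupp.single ((a * b) ^ (j+1) * a) 1 := by
      intro j
      rw [conjMap_single]
      congr 1
      rw [haa]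
      have hsc : a * (b * a) ^ j = (a * b) ^ j * a :=
        (SemiconjBy.pow_right (by simp [SemiconjBy, mul_assoc]) j)
      rw [← mul_assoc a ((b*a)^j) b, hsc, mul_assoc ((a*b)^j) a b, ← pow_succ]
    rw [Finset.sum_congr rfl (fun j _ => hterm j)]
    rw [Finset.sum_range_succ']
    rw [pow_zero, one_mul, add_comm]

theorem artinRels_liftable : ∀ r ∈ artinRels M, FreeGroup.lift (fgen M) r = 1 := by
  rintro r ⟨s, t, hst, hm0, rfl⟩
  rw [map_mul, map_inv, lift_altWord, lift_altWord, mul_inv_eq_one]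
  have ha := msimple_sq M s
  have hb := msimple_sq M t
  have hm := msimple_braid M s t
  have hm' : (M.simple t * M.simple s) ^ (M s t) = 1 := by
    have := msimple_braid M t s
    rwa [M.symmetric t s] at this
  congr 1
  · exact altProd_braid ha hb hm
  · exact sum_single_braid ha hb hm

/-- The homomorphism from the Artin-Tits group to `W ⋉ ℤ[W]`. -/
noncomputable def φ : ArtinTits M →* GG M.Group :=
  PresentedGroup.toGroup (artinRels_liftable M)

theorem φ_of (i : S) : φ M (PresentedGroup.of i) = ggen (M.simple i) :=
  PresentedGroup.toGroup.of (artinRels_liftable M)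

end ArtinHom



open Real

/-- Rotation matrix. -/
noncomputable def Rmat (x : ℝ) : Matrix (Fin 2) (Fin 2) ℝ :=
  !![Real.cos x, -Real.sin x; Real.sin x, Real.cos x]

theorem Rmat_mul (x y : ℝ) : Rmat x * Rmat y = Rmat (x + y) := by
  unfold Rmat
  rw [Matrix.mul_fin_two]
  rw [Real.cos_add, Real.sin_add]
  congr 1 <;> ring

theorem Rmat_zero : Rmat 0 = 1 := by
  unfold Rmat
  rw [Matrix.one_fin_two]
  norm_num

theorem Rmat_two_pi : Rmat (2 * Real.pi) = 1 := by
  unfold Rmat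
  rw [Matrix.one_fin_two, Real.cos_two_pi, Real.sin_two_pi]
  norm_num

/-- The matrix of `σ_i σ_j` on the plane spanned by `α_i, α_j`. -/
noncomputable def Pmat (c : ℝ) : Matrix (Fin 2) (Fin 2) ℝ :=
  !![4 * c ^ 2 - 1, -(2 * c); 2 * c, -1]

noncomputable def Cmat (c s : ℝ) : Matrix (Fin 2) (Fin 2) ℝ := !![1, -c; 0, s]

theorem Cmat_mul_Pmat (θ : ℝ) :
    Cmat (Real.cos θ) (Real.sin θ) * Pmat (Real.cos θ)
      = Rmat (2 * θ) * Cmat (Real.cos θ) (Real.sin θ) := by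
  have hss : Real.sin θ ^ 2 = 1 - Real.cos θ ^ 2 := Real.sin_sq θ
  unfold Cmat Pmat Rmat
  rw [Matrix.mul_fin_two, Matrix.mul_fin_two, Real.cos_two_mul, Real.sin_two_mul]
  ext i j
  fin_cases i <;> fin_cases j <;> simp
  · ring
  · linear_combination (2 * Real.cos θ) * hss
  · ring
  · ring

theorem Cmat_mul_Pmat_pow (θ : ℝ) (k : ℕ) :
    Cmat (Real.cos θ) (Real.sin θ) * (Pmat (Real.cos θ)) ^ k
      = Rmat (2 * θ * k) * Cmat (Real.cos θ) (Real.sin θ) := by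
  induction k with
  | zero => simp [Rmat_zero]
  | succ k ih =>
    rw [pow_succ, ← mul_assoc, ih, mul_assoc, Cmat_mul_Pmat, ← mul_assoc, Rmat_mul]
    push_cast
    ring_nf

theorem Pmat_pow_eq_one {m : ℕ} (hm : 2 ≤ m) :
    (Pmat (Real.cos (Real.pi / m))) ^ m = 1 := by
  set θ := Real.pi / m
  have hm0 : (m : ℝ) ≠ 0 := by positivity
  have hθ : 2 * θ * m = 2 * Real.pi := by field_simp [θ]; exact div_mul_cancel₀ Real.pi hm0
  have hkey : Cmat (Real.cos θ) (Real.sin θ) * (Pmat (Real.cos θ)) ^ m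
      = Cmat (Real.cos θ) (Real.sin θ) := by
    rw [Cmat_mul_Pmat_pow, hθ, Rmat_two_pi, one_mul]
  have hs : Real.sin θ ≠ 0 := by
    have h1 : 0 < θ := by positivity
    have h2 : θ < Real.pi := by
      have hm1 : (1:ℝ) < m := by exact_mod_cast lt_of_lt_of_le one_lt_two hm
      rw [div_lt_iff₀ (by positivity)]
      nlinarith [Real.pi_pos]
    exact ne_of_gt (Real.sin_pos_of_pos_of_lt_pi h1 h2)
  have hC : IsUnit (Cmat (Real.cos θ) (Real.sin θ)) := by
    rw [Matrix.isUnit_iff_isUnit_det]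
    unfold Cmat
    rw [Matrix.det_fin_two_of]
    simpa using hs
  calc (Pmat (Real.cos θ)) ^ m
      = 1 := hC.mul_left_cancel (by rw [hkey, mul_one])

section GeomRep

variable {S : Type} (M : CoxeterMatrix S)

/-- Entries of the Coxeter bilinear form. Note `π / 0 = 0` and `-cos 0 = -1`, which is the
correct convention for `m = ∞`. -/
noncomputable def cmat (i j : S) : ℝ := -Real.cos (Real.pi / M i j)

theorem cmat_diag (i : S) : cmat M i i = 1 := by
  rw [cmat, M.diagonal i]
  norm_num

theorem cmat_symm (i j : S) : cmat M i j = cmat M j i := by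
  rw [cmat, cmat, M.symmetric i j]

/-- The simple root `α_i`. -/
noncomputable def rootα (i : S) : S →₀ ℝ := Finsupp.single i 1

/-- The linear functional `v ↦ B(α_i, v)`. -/
noncomputable def fform (i : S) : (S →₀ ℝ) →ₗ[ℝ] ℝ :=
  Finsupp.linearCombination ℝ (fun j => cmat M i j)

theorem fform_root (i j : S) : fform M i (rootα j) = cmat M i j := by
  rw [fform, rootα, Finsupp.linearCombination_single, one_smul]

/-- The geometric reflection associated to `i`, as a linear map. -/
noncomputable def sigmaMap (i : S) : (S →₀ ℝ) →ₗ[ℝ] (S →₀ ℝ) :=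
  LinearMap.id - (2 : ℝ) • ((fform M i).smulRight (rootα i))

theorem sigmaMap_apply (i : S) (v : S →₀ ℝ) :
    sigmaMap M i v = v - (2 * fform M i v) • rootα i := by
  rw [sigmaMap]
  simp [LinearMap.smulRight_apply, smul_smul]

theorem sigmaMap_invol (i : S) : (sigmaMap M i).comp (sigmaMap M i) = LinearMap.id := by
  apply LinearMap.ext
  intro v
  rw [LinearMap.comp_apply, sigmaMap_apply, sigmaMap_apply, LinearMap.id_apply]
  rw [map_sub, map_smul, fform_root, cmat_diag]
  rw [smul_eq_mul, mul_one]
  module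

/-- The geometric reflection associated to `i`, as a linear automorphism. -/
noncomputable def sigmaRef (i : S) : (S →₀ ℝ) ≃ₗ[ℝ] (S →₀ ℝ) :=
  LinearEquiv.ofLinear (sigmaMap M i) (sigmaMap M i) (sigmaMap_invol M i) (sigmaMap_invol M i)

theorem sigmaRef_apply (i : S) (v : S →₀ ℝ) :
    sigmaRef M i v = v - (2 * fform M i v) • rootα i := sigmaMap_apply M i v

theorem sigmaRef_fixed (i : S) {v : S →₀ ℝ} (hv : fform M i v = 0) : sigmaRef M i v = v := by
  rw [sigmaRef_apply, hv]
  simp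

theorem sigmaRef_root_self (i : S) : sigmaRef M i (rootα i) = -rootα i := by
  rw [sigmaRef_apply, fform_root, cmat_diag]
  module

theorem sigmaRef_root_other (i j : S) :
    sigmaRef M i (rootα j) = rootα j - (2 * cmat M i j) • rootα i := by
  rw [sigmaRef_apply, fform_root]

theorem sigmaRef_sq (i : S) : sigmaRef M i * sigmaRef M i = 1 := by
  apply LinearEquiv.ext
  intro v
  have := LinearMap.ext_iff.mp (sigmaMap_invol M i) v
  simpa [sigmaRef] using this

end GeomRep

section BraidCore

variable {S : Type} (M : CoxeterMatrix S)

theorem LEmul_apply {V : Type*} [AddCommGroup V] [Module ℝ V] (f g : V ≃ₗ[ℝ] V) (x : V) :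
    (f * g) x = f (g x) := rfl

theorem sin_pi_div_ne {m : ℕ} (hm2 : 2 ≤ m) : Real.sin (Real.pi / m) ≠ 0 := by
  have h1 : 0 < Real.pi / m := by positivity
  have h2 : Real.pi / m < Real.pi := by
    have hm1 : (1:ℝ) < m := by exact_mod_cast lt_of_lt_of_le one_lt_two hm2
    rw [div_lt_iff₀ (by positivity)]
    nlinarith [Real.pi_pos]
  exact ne_of_gt (Real.sin_pos_of_pos_of_lt_pi h1 h2)

theorem braid_core (i j : S) (hij : i ≠ j) (hm : M i j ≠ 0) :
    (sigmaRef M i * sigmaRef M j) ^ (M i j) = 1 := by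
  have hm2 : 2 ≤ M i j := by
    have h1 := M.off_diagonal i j hij
    omega
  set m := M i j with hmdef
  set θ := Real.pi / m with hθdef
  set cc := Real.cos θ with hccdef
  have hcij : cmat M i j = -cc := rfl
  have hcji : cmat M j i = -cc := by rw [← cmat_symm M i j]; exact hcij
  have hs : Real.sin θ ≠ 0 := sin_pi_div_ne hm2
  have hd : (1:ℝ) - cc ^ 2 ≠ 0 := by
    have h1 : Real.sin θ ^ 2 = 1 - cc ^ 2 := Real.sin_sq θ
    rw [← h1]
    exact pow_ne_zero 2 hs
  apply LinearEquiv.ext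
  intro v
  set x := fform M i v with hx
  set y := fform M j v with hy
  set a := (x + cc * y) / (1 - cc ^ 2) with ha
  set b := (y + cc * x) / (1 - cc ^ 2) with hb
  set z := v - a • rootα i - b • rootα j with hz
  have hvz : v = a • rootα i + b • rootα j + z := by rw [hz]; abel
  have hfi : fform M i z = 0 := by
    rw [hz, map_sub, map_sub, map_smul, map_smul, fform_root, fform_root, cmat_diag, hcij,
      ← hx, ha, hb]
    field_simp
    linear_combination (-x) * mul_inv_cancel₀ hd
  have hfj : fform M j z = 0 := by
    rw [hz, map_sub, map_sub, map_smul, map_smul, fform_root, fform_root, cmat_diag, hcji,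
      ← hy, ha, hb]
    field_simp
    linear_combination (-y) * mul_inv_cancel₀ hd
  have hσj : ∀ p q : ℝ, sigmaRef M j (p • rootα i + q • rootα j + z)
      = p • rootα i + (2 * cc * p - q) • rootα j + z := by
    intro p q
    rw [map_add, map_add, map_smul, map_smul, sigmaRef_root_other M j i,
      sigmaRef_root_self M j, sigmaRef_fixed M j hfj, hcji]
    module
  have hσi : ∀ p q : ℝ, sigmaRef M i (p • rootα i + q • rootα j + z)
      = (-p + 2 * cc * q) • rootα i + q • rootα j + z := by
    intro p q
    rw [map_add, map_add, map_smul, map_smul, sigmaRef_root_other M i j,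
      sigmaRef_root_self M i, sigmaRef_fixed M i hfi, hcij]
    module
  have hstep : ∀ p q : ℝ, (sigmaRef M i * sigmaRef M j) (p • rootα i + q • rootα j + z)
      = ((4 * cc ^ 2 - 1) * p - 2 * cc * q) • rootα i
        + (2 * cc * p - q) • rootα j + z := by
    intro p q
    rw [LEmul_apply, hσj, hσi]
    congr 1
    congr 1
    ring
  have hcoord : ∀ u : Fin 2 → ℝ, (Pmat cc).mulVec u
      = ![(4 * cc ^ 2 - 1) * u 0 - 2 * cc * u 1, 2 * cc * u 0 - u 1] := by
    intro u
    funext w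
    fin_cases w <;>
      simp [Pmat, Matrix.mulVec, dotProduct, Fin.sum_univ_two] <;> ring
  have hpow : ∀ k : ℕ, ((sigmaRef M i * sigmaRef M j) ^ k) v
      = (((Pmat cc) ^ k).mulVec ![a, b] 0) • rootα i
        + (((Pmat cc) ^ k).mulVec ![a, b] 1) • rootα j + z := by
    intro k
    induction k with
    | zero =>
      rw [pow_zero, pow_zero, Matrix.one_mulVec]
      simpa using hvz
    | succ k ih =>
      rw [pow_succ' (sigmaRef M i * sigmaRef M j) k, LEmul_apply, ih, hstep]
      rw [pow_succ' (Pmat cc) k, ← Matrix.mulVec_mulVec, hcoord]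
      congr 2 <;> simp
  have hfin := hpow m
  rw [Pmat_pow_eq_one hm2, Matrix.one_mulVec] at hfin
  have h1 : (1 : (S →₀ ℝ) ≃ₗ[ℝ] (S →₀ ℝ)) v = v := rfl
  rw [h1, hfin]
  simp only [Matrix.cons_val_zero, Matrix.cons_val_one, Matrix.head_cons]
  exact hvz.symm

end BraidCore

section Parabolic

variable {S : Type} (M : CoxeterMatrix S)

theorem sigma_liftable : CoxeterMatrix.IsLiftable M (fun i => sigmaRef M i) := by
  intro i j
  by_cases hij : i = j
  · subst hij
    rw [M.diagonal i, pow_one]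
    exact sigmaRef_sq M i
  · by_cases hm : M i j = 0
    · rw [hm, pow_zero]
    · exact braid_core M i j hij hm

noncomputable def geomRep : M.Group →* ((S →₀ ℝ) ≃ₗ[ℝ] (S →₀ ℝ)) :=
  M.toCoxeterSystem.lift ⟨fun i => sigmaRef M i, sigma_liftable M⟩

theorem geomRep_simple (i : S) : geomRep M (M.simple i) = sigmaRef M i := by
  have := M.toCoxeterSystem.lift_apply_simple (sigma_liftable M) i
  rwa [CoxeterMatrix.toCoxeterSystem_simple] at this

theorem simple_not_mem_parabolic {X : Set S} {t : S} (ht : t ∉ X)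
    (hmem : M.simple t ∈ Subgroup.closure (Set.range fun x : X => M.simple (x : S))) :
    False := by
  classical
  set UX : Submodule ℝ (S →₀ ℝ) :=
    Submodule.span ℝ (Set.range fun x : X => rootα (x : S)) with hUX
  set K2 : Subgroup ((S →₀ ℝ) ≃ₗ[ℝ] (S →₀ ℝ)) :=
    { carrier := {g | ∀ v, g v - v ∈ UX}
      one_mem' := by intro v; simp
      mul_mem' := by
        intro g h hg hh v
        have h1 : (g * h) v - v = (g (h v) - h v) + (h v - v) := by
          rw [LEmul_apply]; abel
        rw [h1]
        exact UX.add_mem (hg (h v)) (hh v)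
      inv_mem' := by
        intro g hg v
        have h2 : g (g⁻¹ v) = v := by
          rw [← LEmul_apply g g⁻¹ v, mul_inv_cancel g]
          rfl
        have h1 : g⁻¹ v - v = -(g (g⁻¹ v) - g⁻¹ v) := by
          rw [h2, neg_sub]
        rw [h1]
        exact UX.neg_mem (hg (g⁻¹ v)) } with hK2
  have hK2le : Subgroup.closure (Set.range fun x : X => M.simple (x : S))
      ≤ K2.comap (geomRep M) := by
    rw [Subgroup.closure_le]
    rintro w ⟨x, rfl⟩
    show geomRep M (M.simple (x : S)) ∈ K2
    rw [geomRep_simple]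
    show ∀ v, sigmaRef M (x : S) v - v ∈ UX
    intro v
    rw [sigmaRef_apply]
    have heq : v - (2 * fform M (x : S) v) • rootα (x : S) - v
        = (-(2 * fform M (x : S) v)) • rootα (x : S) := by module
    rw [heq]
    exact UX.smul_mem _ (Submodule.subset_span ⟨x, rfl⟩)
  have h3 := hK2le hmem
  rw [Subgroup.mem_comap, geomRep_simple] at h3
  have h5 := h3 (rootα t)
  rw [sigmaRef_root_self] at h5
  have h6 : rootα t ∈ UX := by
    have heq : -rootα t - rootα t = (-2 : ℝ) • rootα t := by module
    rw [heq] at h5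
    have h7 := UX.smul_mem (-(1:ℝ)/2) h5
    rwa [smul_smul, show (-(1:ℝ)/2) * (-2) = 1 by norm_num, one_smul] at h7
  have h8 : ∀ u ∈ UX, (u : S →₀ ℝ) t = 0 := by
    intro u hu
    induction hu using Submodule.span_induction with
    | mem u hu =>
      obtain ⟨x, rfl⟩ := hu
      have hxt : (x : S) ≠ t := fun hc => ht (hc ▸ x.2)
      exact Finsupp.single_eq_of_ne' hxt
    | zero => simp
    | add u v _ _ hu hv => rw [Finsupp.add_apply, hu, hv, add_zero]
    | smul c u _ hu => rw [Finsupp.smul_apply, hu, smul_zero]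
  have h9 := h8 _ h6
  rw [rootα, Finsupp.single_eq_same] at h9
  exact one_ne_zero h9

end Parabolic

section MainArg

open Finsupp

variable {S : Type} (M : CoxeterMatrix S)

/-- Prefix-conjugates of a word: `s₁, s₁s₂s₁⁻¹, s₁s₂s₃s₂⁻¹s₁⁻¹, …`. -/
noncomputable def pconj : List S → List M.Group
  | [] => []
  | i :: ω => M.simple i :: (pconj ω).map (fun t => M.simple i * t * (M.simple i)⁻¹)

theorem φ_word (ω : List S) :
    φ M ((ω.map (fun i => (PresentedGroup.of i : ArtinTits M))).prod)
      = ⟨(ω.map M.simple).prod,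
         ((pconj M ω).map (fun t => Finsupp.single t (1 : ℤ))).sum⟩ := by
  induction ω with
  | nil =>
    rw [List.map_nil, List.prod_nil, map_one, GG.one_def]
    rfl
  | cons i ω ih =>
    rw [List.map_cons, List.prod_cons, map_mul, ih, φ_of, ggen, GG.mul_def]
    congr 1
    show Finsupp.single (M.simple i) 1
        + conjMap (M.simple i) (((pconj M ω).map (fun t => Finsupp.single t (1 : ℤ))).sum)
      = _
    rw [show pconj M (i :: ω)
        = M.simple i :: (pconj M ω).map (fun t => M.simple i * t * (M.simple i)⁻¹) from rfl]
    rw [List.map_cons, List.sum_cons, List.map_map]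
    congr 1
    have hmls : conjMap (M.simple i) (((pconj M ω).map (fun t => Finsupp.single t (1:ℤ))).sum)
        = (((pconj M ω).map (fun t => Finsupp.single t (1:ℤ))).map
            (fun v => conjMap (M.simple i) v)).sum :=
      map_list_sum (Finsupp.mapDomain.addMonoidHom (fun u => M.simple i * u * (M.simple i)⁻¹)) _
    rw [hmls, List.map_map]
    congr 1
    apply List.map_congr_left
    intro t _
    exact conjMap_single (M.simple i) t 1

theorem listsingle_nonneg {W : Type} [Group W] (L : List W) (q : W) :
    0 ≤ ((L.map fun t => Finsupp.single t (1 : ℤ)).sum) q := by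
  classical
  induction L with
  | nil => simp
  | cons a L ih =>
    rw [List.map_cons, List.sum_cons, Finsupp.add_apply]
    have h1 : (0:ℤ) ≤ Finsupp.single a (1:ℤ) q := by
      rw [Finsupp.single_apply]
      split <;> norm_num
    linarith

theorem listsingle_pos {W : Type} [Group W] (L : List W) {q : W} (hq : q ∈ L) :
    0 < ((L.map fun t => Finsupp.single t (1 : ℤ)).sum) q := by
  classical
  induction L with
  | nil => simp at hq
  | cons a L ih =>
    rw [List.map_cons, List.sum_cons, Finsupp.add_apply]
    rcases List.mem_cons.mp hq with rfl | hq'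
    · have h1 := listsingle_nonneg L q
      rw [Finsupp.single_eq_same]
      linarith
    · have h1 : (0:ℤ) ≤ Finsupp.single a (1:ℤ) q := by
        rw [Finsupp.single_apply]
        split <;> norm_num
      have h2 := ih hq'
      linarith

/-- The subgroup of `W ⋉ ℤ[W]` supported (in both components) on a subgroup of `W`. -/
noncomputable def KK {W : Type} [Group W] (WX : Subgroup W) : Subgroup (GG W) where
  carrier := {p | p.w ∈ WX ∧ ∀ q ∈ p.v.support, q ∈ WX}
  one_mem' := by
    constructor
    · exact WX.one_mem
    · intro q hq
      simp [GG.one_def] at hq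
  mul_mem' := by
    classical
    rintro x y ⟨hx1, hx2⟩ ⟨hy1, hy2⟩
    constructor
    · exact WX.mul_mem hx1 hy1
    · intro q hq
      rw [GG.mul_v] at hq
      rcases Finset.mem_union.mp (Finsupp.support_add hq) with h | h
      · exact hx2 q h
      · have h3 := Finsupp.mapDomain_support h
        obtain ⟨r, hr, rfl⟩ := Finset.mem_image.mp h3
        exact WX.mul_mem (WX.mul_mem hx1 (hy2 r hr)) (WX.inv_mem hx1)
  inv_mem' := by
    classical
    rintro x ⟨hx1, hx2⟩
    constructor
    · exact WX.inv_mem hx1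
    · intro q hq
      rw [GG.inv_def] at hq
      simp only [Finsupp.support_neg] at hq
      have h3 := Finsupp.mapDomain_support hq
      obtain ⟨r, hr, rfl⟩ := Finset.mem_image.mp h3
      exact WX.mul_mem (WX.mul_mem (WX.inv_mem hx1) (hx2 r hr)) (WX.inv_mem (WX.inv_mem hx1))

theorem pconj_letters (WX : Subgroup M.Group) :
    ∀ ω : List S, (∀ p ∈ pconj M ω, p ∈ WX) → ∀ i ∈ ω, M.simple i ∈ WX := by
  intro ω
  induction ω with
  | nil => intro _ i hi; simp at hi
  | cons a ω ih =>
    intro hall i hi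
    have hsa : M.simple a ∈ WX := hall _ (List.mem_cons_self)
    rcases List.mem_cons.mp hi with rfl | hi'
    · exact hsa
    · apply ih _ i hi'
      intro p hp
      have hconj : M.simple a * p * (M.simple a)⁻¹ ∈ WX :=
        hall _ (List.mem_cons_of_mem _ (List.mem_map_of_mem hp))
      have heq : p = (M.simple a)⁻¹ * (M.simple a * p * (M.simple a)⁻¹) * M.simple a := by
        group
      rw [heq]
      exact WX.mul_mem (WX.mul_mem (WX.inv_mem hsa) hconj) hsa

end MainArg


end ATProof

open ATProof in
/-- Lemma 3.1. Let `Γ` be a connected spherical-type Coxeter graph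
with vertices `s₁, …, s_n`, and let `X ⊊ S`.  Then `Z(A_Γ) ∩ A_X = {1}`, where
`Z(A_Γ)` is the infinite cyclic subgroup generated by `δ = (σ₁ ⋯ σ_n)^h`, `h` being
the Coxeter number of `(W_Γ, S)` (the order of a Coxeter element of `W_Γ`). -/
theorem center_inter_parabolic_eq_bot {S : Type} [Fintype S] (M : CoxeterMatrix S)
    (hconn : (coxGraph M).Connected)
    (hspherical : Finite M.Group)
    (e : Fin (Fintype.card S) ≃ S)
    (h : ℕ) (hh : h = orderOf ((List.ofFn fun i => M.simple (e i)).prod))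
    (δ : ArtinTits M)
    (hδ : δ = ((List.ofFn fun i => (PresentedGroup.of (e i) : ArtinTits M)).prod) ^ h)
    (hZ : Subgroup.center (ArtinTits M) = Subgroup.zpowers δ)
    (X : Set S) (hX : X ≠ Set.univ) :
    Subgroup.center (ArtinTits M)
        ⊓ Subgroup.closure (Set.range fun x : X => (PresentedGroup.of (x : S) : ArtinTits M))
      = ⊥ := by
  classical
  haveI : Finite M.Group := hspherical
  rw [eq_bot_iff]
  intro g hg
  rw [Subgroup.mem_inf] at hg
  obtain ⟨hgZ, hgX⟩ := hg
  rw [hZ] at hgZ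
  obtain ⟨k, hk⟩ := Subgroup.mem_zpowers_iff.mp hgZ
  rw [Subgroup.mem_bot]
  by_cases hk0 : k = 0
  · rw [← hk, hk0, zpow_zero]
  · exfalso
    obtain ⟨t, ht⟩ := (Set.ne_univ_iff_exists_notMem X).mp hX
    set WX : Subgroup M.Group :=
      Subgroup.closure (Set.range fun x : X => M.simple (x : S)) with hWX
    set ω : List S := List.ofFn e with hω
    set c : M.Group := (ω.map M.simple).prod with hc
    set vP : M.Group →₀ ℤ := ((pconj M ω).map (fun t => Finsupp.single t (1:ℤ))).sum with hvP
    set vδ : M.Group →₀ ℤ := ∑ i ∈ Finset.range h, conjMap (c ^ i) vP with hvδ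
    have h0 : 0 < h := by
      rw [hh]; exact orderOf_pos _
    have hch : c ^ h = 1 := by
      rw [hc, hω, List.map_ofFn, hh]
      exact pow_orderOf_eq_one _
    have hδω : δ = ((ω.map (fun i => (PresentedGroup.of i : ArtinTits M))).prod) ^ h := by
      rw [hω, List.map_ofFn, hδ]
      rfl
    have hφδ : φ M δ = ⟨1, vδ⟩ := by
      rw [hδω, map_pow, φ_word M ω, GG.pow_def]
      rw [← hc, ← hvP]
      show GG.mk (c ^ h) _ = _
      rw [hch, hvδ]
    have hφg : φ M g = ⟨1, k • vδ⟩ := by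
      rw [← hk, map_zpow, hφδ, GG.one_zpow]
    have hle : Subgroup.closure (Set.range fun x : X => (PresentedGroup.of (x : S) : ArtinTits M))
        ≤ (KK WX).comap (φ M) := by
      rw [Subgroup.closure_le]
      rintro w ⟨x, rfl⟩
      rw [SetLike.mem_coe, Subgroup.mem_comap]
      show φ M (PresentedGroup.of (x : S)) ∈ KK WX
      rw [φ_of]
      constructor
      · exact Subgroup.subset_closure ⟨x, rfl⟩
      · intro q hq
        have h1 := Finsupp.support_single_subset hq
        rw [Finset.mem_singleton] at h1
        rw [h1]
        exact Subgroup.subset_closure ⟨x, rfl⟩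
    have hmem := hle hgX
    rw [Subgroup.mem_comap, hφg] at hmem
    obtain ⟨-, hsupp⟩ := hmem
    have hall : ∀ p ∈ pconj M ω, p ∈ WX := by
      intro p hp
      apply hsupp
      rw [Finsupp.mem_support_iff]
      have hpos : 0 < vδ p := by
        rw [hvδ, Finsupp.finset_sum_apply]
        apply Finset.sum_pos'
        · intro i _
          rw [conjMap_apply]
          exact listsingle_nonneg _ _
        · refine ⟨0, Finset.mem_range.mpr h0, ?_⟩
          rw [pow_zero, conjMap_one]
          exact listsingle_pos _ hp
      rw [Finsupp.smul_apply, smul_eq_mul]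
      exact mul_ne_zero hk0 (ne_of_gt hpos)
    have hsimple : M.simple t ∈ WX := by
      apply pconj_letters M WX ω hall
      rw [hω]
      exact List.mem_ofFn.mpr ⟨e.symm t, e.apply_symm_apply t⟩
    exact simple_not_mem_parabolic M ht hsimple
end
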